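/- arXiv:2404.17823 — 3 statements merged into one kernel-verified Lean document; each statement's English description precedes it below -/
import Mathlib

section
/- (Probability generating functional of the 1-D Poisson point process.) Let r > 0, let (E_k)_{k≥1} be i.i.d. random variables with exponential distribution of rate r, and set T_k = E₁ + ⋯ + E_k. Then for every measurable function f : [0,∞) → [0,1], E[ Π_{k=1}^∞ f(T_k) ] = exp( −r ∫_0^∞ (1 − f(x)) dx ), where the infinite product is the (almost surely existing) limit of the partial products Π_{k=1}^n f(T_k), and both sides take values in [0,1] (with exp(−∞) interpreted as 0 when ∫_0^∞ (1 − f(x)) dx = ∞). -/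
open MeasureTheory ProbabilityTheory Set Filter Topology
open scoped ENNReal NNReal

namespace PGFLaux

lemma abs_exp_neg_sub_exp_neg {a b : ℝ} (ha : 0 ≤ a) (hb : 0 ≤ b) :
    |Real.exp (-a) - Real.exp (-b)| ≤ |a - b| := by
  wlog h : b ≤ a generalizing a b
  · rw [abs_sub_comm, abs_sub_comm a b]; exact this hb ha (le_of_not_ge h)
  have h1 : Real.exp (-a) ≤ Real.exp (-b) := Real.exp_le_exp.2 (by linarith)
  rw [abs_of_nonpos (by linarith), abs_of_nonneg (by linarith)]
  have h2 : Real.exp (-a) = Real.exp (-b) * Real.exp (-(a-b)) := by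
    rw [← Real.exp_add]; ring_nf
  have h3 : -(a-b) + 1 ≤ Real.exp (-(a-b)) := Real.add_one_le_exp _
  have h4 : Real.exp (-b) ≤ 1 := Real.exp_le_one_iff.2 (by linarith)
  nlinarith [Real.exp_pos (-b)]

variable {r : ℝ}

/-- Key identity for continuous compactly supported `g`. -/
lemma cont_key (hr : 0 < r) {g : ℝ → ℝ} (hgc : Continuous g)
    (hgs : HasCompactSupport g) (hg0 : ∀ x, 0 ≤ g x) (hg1 : ∀ x, g x ≤ 1) (t : ℝ) :
    ∫ s in Ioi t, r * Real.exp (-(r * (s - t))) *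
        ((1 - g s) * Real.exp (-(r * ∫ u in Ioi s, g u)))
      = Real.exp (-(r * ∫ u in Ioi t, g u)) := by
  have hgi : Integrable g := hgc.integrable_of_hasCompactSupport hgs
  obtain ⟨N, hN⟩ : ∃ N : ℝ, ∀ u, N < u → g u = 0 := by
    obtain ⟨N, hN⟩ := (hgs.isBounded.subset_closedBall 0)
    refine ⟨N, fun u hu => image_eq_zero_of_notMem_tsupport (fun hmem => ?_)⟩
    have := hN hmem
    rw [Metric.mem_closedBall, Real.dist_eq, sub_zero] at this
    exact absurd (le_abs_self u |>.trans this) (not_le.2 hu)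
  set A : ℝ → ℝ := fun s => ∫ u in Ioi s, g u with hA
  have hAB : ∀ s, A s = -∫ u in N..s, g u := by
    intro s
    rcases le_total s N with hs | hs
    · have hsplit : Ioi s = Ioc s N ∪ Ioi N := (Ioc_union_Ioi_eq_Ioi hs).symm
      have h2 : ∫ u in Ioi N, g u = 0 := by
        rw [setIntegral_congr_fun measurableSet_Ioi (fun u hu => hN u hu)]
        simp
      show (∫ u in Ioi s, g u) = -∫ u in N..s, g u
      rw [hsplit, setIntegral_union (Ioc_disjoint_Ioi le_rfl) measurableSet_Ioi
        (hgi.integrableOn) (hgi.integrableOn), h2, add_zero,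
        ← intervalIntegral.integral_of_le hs, intervalIntegral.integral_symm]
    · have h1 : A s = 0 := by
        show (∫ u in Ioi s, g u) = 0
        rw [setIntegral_congr_fun measurableSet_Ioi (fun u hu => hN u (lt_of_le_of_lt hs hu))]
        simp
      have h2 : ∫ u in N..s, g u = 0 := by
        rw [intervalIntegral.integral_of_le hs,
          setIntegral_congr_fun measurableSet_Ioc (fun u hu => hN u hu.1)]
        simp
      rw [h1, h2, neg_zero]
  have hderivA : ∀ s, HasDerivAt A (-(g s)) s := by
    intro s
    have : HasDerivAt (fun s => ∫ u in N..s, g u) (g s) s :=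
      intervalIntegral.integral_hasDerivAt_right (hgi.intervalIntegrable)
        (hgc.stronglyMeasurable.stronglyMeasurableAtFilter) hgc.continuousAt
    have h := this.neg
    refine h.congr_of_eventuallyEq ?_
    filter_upwards with x using (hAB x)
  have hA0 : ∀ s, 0 ≤ A s := fun s => setIntegral_nonneg measurableSet_Ioi (fun u _ => hg0 u)
  set φ : ℝ → ℝ := fun s => -Real.exp (-(r * (s - t)) - r * A s) with hφ
  have hderivφ : ∀ s, HasDerivAt φ
      (r * Real.exp (-(r * (s - t))) * ((1 - g s) * Real.exp (-(r * A s)))) s := by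
    intro s
    have hinner : HasDerivAt (fun s => -(r * (s - t)) - r * A s) (-r - r * -(g s)) s := by
      have h1 : HasDerivAt (fun s : ℝ => -(r * (s - t))) (-r) s := by
        have := ((hasDerivAt_id s).sub_const t).const_mul r
        simpa using this.fun_neg
      exact h1.sub ((hderivA s).const_mul r)
    have := (hinner.exp).fun_neg
    refine this.congr_deriv ?_
    rw [show (-(r * (s - t)) - r * A s) = (-(r * (s - t))) + (-(r * A s)) by ring, Real.exp_add]
    ring
  have hAcont : Continuous A := by
    rw [continuous_iff_continuousAt]
    exact fun s => (hderivA s).continuousAt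
  have hFint : IntegrableOn (fun s => r * Real.exp (-(r * (s - t))) *
      ((1 - g s) * Real.exp (-(r * A s)))) (Ioi t) := by
    have hmaj : IntegrableOn (fun s : ℝ => r * (Real.exp (r * t) * Real.exp (-r * s))) (Ioi t) :=
      (((exp_neg_integrableOn_Ioi t hr).const_mul _).const_mul r)
    apply Integrable.mono' hmaj
    · exact (((continuous_const.mul ((continuous_const.mul ((continuous_id.sub
        continuous_const))).neg.rexp)).mul (((continuous_const.sub hgc)).mul
        ((continuous_const.mul hAcont)).neg.rexp))).aestronglyMeasurable.restrict
    · filter_upwards [ae_restrict_mem measurableSet_Ioi] with s hs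
      have h1 : 0 ≤ 1 - g s := by linarith [hg1 s]
      have h2 : (1 - g s) * Real.exp (-(r * A s)) ≤ 1 := by
        have := Real.exp_le_one_iff.2 (neg_nonpos.2 (mul_nonneg hr.le (hA0 s)))
        exact mul_le_one₀ (by linarith [hg0 s]) (Real.exp_pos _).le this
      have h3 : 0 ≤ (1 - g s) * Real.exp (-(r * A s)) := by positivity
      rw [Real.norm_eq_abs, abs_of_nonneg (by positivity)]
      have h4 : Real.exp (-(r * (s - t))) = Real.exp (r * t) * Real.exp (-r * s) := by
        rw [← Real.exp_add]; ring_nf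
      rw [← h4]
      calc r * Real.exp (-(r * (s - t))) * ((1 - g s) * Real.exp (-(r * A s)))
          ≤ r * Real.exp (-(r * (s - t))) * 1 := by
            apply mul_le_mul_of_nonneg_left h2 (by positivity)
        _ = r * Real.exp (-(r * (s - t))) := mul_one _
  have htend : Tendsto φ atTop (𝓝 0) := by
    rw [show (0:ℝ) = -0 by ring]
    apply Tendsto.neg
    have h1 : Tendsto (fun s : ℝ => -(r * (s - t))) atTop atBot := by
      apply Filter.tendsto_neg_atTop_atBot.comp
      exact (tendsto_atTop_add_const_right atTop (-t) tendsto_id).const_mul_atTop hr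
    apply squeeze_zero (fun s => (Real.exp_pos _).le)
      (g := fun s => Real.exp (-(r * (s - t))))
      (fun s => Real.exp_le_exp.2 (by nlinarith [hA0 s]))
    exact Real.tendsto_exp_atBot.comp h1
  have hmain := integral_Ioi_of_hasDerivAt_of_tendsto' (fun x _ => hderivφ x) hFint htend
  rw [hmain]
  simp [hφ, hA]


lemma key_meas (hr : 0 < r) {g : ℝ → ℝ} (hgm : Measurable g)
    (hg0 : ∀ x, 0 ≤ g x) (hg1 : ∀ x, g x ≤ 1) (hgi : Integrable g) (t : ℝ) :
    ∫ s in Ioi t, r * Real.exp (-(r * (s - t))) *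
        ((1 - g s) * Real.exp (-(r * ∫ u in Ioi s, g u)))
      = Real.exp (-(r * ∫ u in Ioi t, g u)) := by
  have hzs : HasCompactSupport (fun _ : ℝ => (0:ℝ)) := by
    simp [HasCompactSupport, tsupport]
  have hone : ∫ s in Ioi t, r * Real.exp (-(r * (s - t))) = 1 := by
    have := cont_key hr continuous_const hzs (fun _ => le_rfl) (fun _ => zero_le_one) t
    simpa using this
  set A : ℝ → ℝ := fun s => ∫ u in Ioi s, g u with hA
  have hA0 : ∀ s, 0 ≤ A s := fun s => setIntegral_nonneg measurableSet_Ioi (fun u _ => hg0 u)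
  have hAanti : Antitone A := by
    intro a b hab
    exact setIntegral_mono_set hgi.integrableOn
      (Eventually.of_forall fun u => hg0 u) (Ioi_subset_Ioi hab).eventuallyLE
  have hAm : Measurable A := hAanti.measurable
  have hker : IntegrableOn (fun s : ℝ => r * Real.exp (-(r * (s - t)))) (Ioi t) := by
    have hmaj : IntegrableOn (fun s : ℝ => (r * Real.exp (r * t)) * Real.exp (-r * s)) (Ioi t) :=
      ((exp_neg_integrableOn_Ioi t hr).const_mul _)
    refine hmaj.congr_fun (fun s _ => ?_) measurableSet_Ioi
    dsimp only; rw [mul_assoc, ← Real.exp_add]; ring_nf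
  have hint : ∀ (h : ℝ → ℝ), Measurable h → (∀ x, 0 ≤ h x) → (∀ x, h x ≤ 1) →
      ∀ (B : ℝ → ℝ), Measurable B → (∀ s, 0 ≤ B s) →
      IntegrableOn (fun s => r * Real.exp (-(r * (s - t))) *
        ((1 - h s) * Real.exp (-(r * B s)))) (Ioi t) := by
    intro h hm h0 h1 B hBm hB0
    apply Integrable.mono' hker
    · exact ((measurable_const.mul (((measurable_id.sub_const t).const_mul r).neg.exp)).mul
        ((measurable_const.sub hm).mul ((hBm.const_mul r).neg.exp))).aestronglyMeasurable.restrict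
    · filter_upwards with s
      have hh : 0 ≤ 1 - h s := by linarith [h1 s]
      rw [Real.norm_eq_abs,
        abs_of_nonneg (mul_nonneg (by positivity) (mul_nonneg hh (Real.exp_pos _).le))]
      have h2 : (1 - h s) * Real.exp (-(r * B s)) ≤ 1 :=
        mul_le_one₀ (by linarith [h0 s]) (Real.exp_pos _).le
          (Real.exp_le_one_iff.2 (by nlinarith [hB0 s, hr.le]))
      calc r * Real.exp (-(r * (s - t))) * ((1 - h s) * Real.exp (-(r * B s)))
          ≤ r * Real.exp (-(r * (s - t))) * 1 :=
            mul_le_mul_of_nonneg_left h2 (by positivity)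
        _ = r * Real.exp (-(r * (s - t))) := mul_one _
  have key : ∀ ε : ℝ, 0 < ε →
      |(∫ s in Ioi t, r * Real.exp (-(r * (s - t))) *
        ((1 - g s) * Real.exp (-(r * A s)))) - Real.exp (-(r * A t))| ≤ 3 * r * ε := by
    intro ε hε
    obtain ⟨w, hwsupp, hwint, hwcont, hwi⟩ := hgi.exists_hasCompactSupport_integral_sub_le hε
    set w' : ℝ → ℝ := fun x => max 0 (min 1 (w x)) with hw'
    have hw'c : Continuous w' := continuous_const.max (continuous_const.min hwcont)
    have hw's : HasCompactSupport w' := by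
      refine HasCompactSupport.intro' (hwsupp.isCompact) (isClosed_tsupport w) ?_
      intro x hx
      have hwx : w x = 0 := image_eq_zero_of_notMem_tsupport hx
      rw [hw']; dsimp only; rw [hwx, min_eq_right zero_le_one, max_self]
    have hw'0 : ∀ x, 0 ≤ w' x := fun x => le_max_left _ _
    have hw'1 : ∀ x, w' x ≤ 1 := fun x => max_le zero_le_one (min_le_left _ _)
    have hw'i : Integrable w' := hw'c.integrable_of_hasCompactSupport hw's
    have hclamp : ∀ x, |g x - w' x| ≤ |g x - w x| := by
      intro x
      have hgx0 := hg0 x; have hgx1 := hg1 x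
      rcases le_total (w x) 0 with h | h
      · have hwx : w' x = 0 := by
          rw [hw']; dsimp only; rw [min_eq_right (by linarith), max_eq_left h]
        rw [hwx, sub_zero, abs_of_nonneg hgx0, abs_of_nonneg (by linarith)]; linarith
      · rcases le_total 1 (w x) with h2 | h2
        · have hwx : w' x = 1 := by
            rw [hw']; dsimp only; rw [min_eq_left h2, max_eq_right zero_le_one]
          rw [hwx, abs_of_nonpos (by linarith), abs_of_nonpos (by linarith)]; linarith
        · have hwx : w' x = w x := by
            rw [hw']; dsimp only; rw [min_eq_right h2, max_eq_right h]
          rw [hwx]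
    have hδle : ∫ x, |g x - w' x| ≤ ε := by
      refine le_trans (integral_mono ((hgi.sub hw'i).abs) ((hgi.sub hwi).abs) hclamp) ?_
      simpa [Real.norm_eq_abs] using hwint
    set Aw : ℝ → ℝ := fun s => ∫ u in Ioi s, w' u with hAw
    have hAw0 : ∀ s, 0 ≤ Aw s := fun s => setIntegral_nonneg measurableSet_Ioi (fun u _ => hw'0 u)
    have est0 : ∀ s, |A s - Aw s| ≤ ε := by
      intro s
      have h1 : A s - Aw s = ∫ u in Ioi s, (g u - w' u) :=
        (integral_sub hgi.integrableOn hw'i.integrableOn).symm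
      rw [h1]
      calc |∫ u in Ioi s, (g u - w' u)| ≤ ∫ u in Ioi s, |g u - w' u| := by
            simpa [Real.norm_eq_abs] using
              norm_integral_le_integral_norm (μ := volume.restrict (Ioi s)) (fun u => g u - w' u)
        _ ≤ ∫ u, |g u - w' u| :=
            setIntegral_le_integral ((hgi.sub hw'i).abs) (Eventually.of_forall fun u => abs_nonneg _)
        _ ≤ ε := hδle
    have est2 : ∀ s, |Real.exp (-(r * A s)) - Real.exp (-(r * Aw s))| ≤ r * ε := by
      intro s
      refine le_trans (abs_exp_neg_sub_exp_neg (mul_nonneg hr.le (hA0 s))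
        (mul_nonneg hr.le (hAw0 s))) ?_
      rw [← mul_sub, abs_mul, abs_of_nonneg hr.le]
      exact mul_le_mul_of_nonneg_left (est0 s) hr.le
    have hcont := cont_key hr hw'c hw's hw'0 hw'1 t
    have hFgint := hint g hgm hg0 hg1 A hAm hA0
    have hAwanti : Antitone Aw := by
      intro a b hab
      exact setIntegral_mono_set hw'i.integrableOn
        (Eventually.of_forall fun u => hw'0 u) (Ioi_subset_Ioi hab).eventuallyLE
    have hFwint := hint w' hw'c.measurable hw'0 hw'1 Aw hAwanti.measurable hAw0
    -- bound the difference of the two integrals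
    have hb1 : IntegrableOn (fun s : ℝ => (r * ε) * (r * Real.exp (-(r * (s - t))))) (Ioi t) :=
      hker.const_mul _
    have hb2 : IntegrableOn (fun s : ℝ => r * |g s - w' s|) (Ioi t) :=
      (((hgi.sub hw'i).abs).const_mul r).integrableOn
    have hdiff : |(∫ s in Ioi t, r * Real.exp (-(r * (s - t))) *
          ((1 - g s) * Real.exp (-(r * A s)))) -
        (∫ s in Ioi t, r * Real.exp (-(r * (s - t))) *
          ((1 - w' s) * Real.exp (-(r * Aw s))))| ≤ 2 * r * ε := by
      rw [← integral_sub hFgint hFwint]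
      have hptw : ∀ s ∈ Ioi t,
          |r * Real.exp (-(r * (s - t))) * ((1 - g s) * Real.exp (-(r * A s))) -
           r * Real.exp (-(r * (s - t))) * ((1 - w' s) * Real.exp (-(r * Aw s)))|
          ≤ (r * ε) * (r * Real.exp (-(r * (s - t)))) + r * |g s - w' s| := by
        intro s hs
        have hgx1 := hg1 s; have hgx0 := hg0 s
        have hexple : Real.exp (-(r * (s - t))) ≤ 1 :=
          Real.exp_le_one_iff.2 (by nlinarith [mem_Ioi.1 hs])
        have hXY : |Real.exp (-(r * A s)) - Real.exp (-(r * Aw s))| ≤ r * ε := est2 s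
        have hYle : Real.exp (-(r * Aw s)) ≤ 1 :=
          Real.exp_le_one_iff.2 (by nlinarith [hAw0 s, hr.le])
        have expand : r * Real.exp (-(r * (s - t))) * ((1 - g s) * Real.exp (-(r * A s))) -
            r * Real.exp (-(r * (s - t))) * ((1 - w' s) * Real.exp (-(r * Aw s)))
            = r * Real.exp (-(r * (s - t))) *
              ((1 - g s) * (Real.exp (-(r * A s)) - Real.exp (-(r * Aw s)))
                + (w' s - g s) * Real.exp (-(r * Aw s))) := by ring
        rw [expand, abs_mul, abs_of_nonneg (a := r * Real.exp (-(r * (s - t)))) (by positivity)]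
        have e1 : |(1 - g s) * (Real.exp (-(r * A s)) - Real.exp (-(r * Aw s)))| ≤ r * ε := by
          rw [abs_mul, abs_of_nonneg (by linarith : (0:ℝ) ≤ 1 - g s)]
          calc (1 - g s) * |Real.exp (-(r * A s)) - Real.exp (-(r * Aw s))|
              ≤ 1 * (r * ε) := mul_le_mul (by linarith) hXY (abs_nonneg _) zero_le_one
            _ = r * ε := one_mul _
        have e2 : |(w' s - g s) * Real.exp (-(r * Aw s))| ≤ |g s - w' s| := by
          rw [abs_mul, abs_sub_comm, abs_of_nonneg (Real.exp_pos _).le]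
          calc |g s - w' s| * Real.exp (-(r * Aw s)) ≤ |g s - w' s| * 1 :=
              mul_le_mul_of_nonneg_left hYle (abs_nonneg _)
            _ = |g s - w' s| := mul_one _
        have h5 : |(1 - g s) * (Real.exp (-(r * A s)) - Real.exp (-(r * Aw s)))
            + (w' s - g s) * Real.exp (-(r * Aw s))| ≤ r * ε + |g s - w' s| :=
          le_trans (abs_add_le _ _) (add_le_add e1 e2)
        calc (r * Real.exp (-(r * (s - t)))) * |(1 - g s) * (Real.exp (-(r * A s)) -
              Real.exp (-(r * Aw s))) + (w' s - g s) * Real.exp (-(r * Aw s))|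
            ≤ (r * Real.exp (-(r * (s - t)))) * (r * ε + |g s - w' s|) :=
              mul_le_mul_of_nonneg_left h5 (by positivity)
          _ = (r * ε) * (r * Real.exp (-(r * (s - t))))
              + (r * Real.exp (-(r * (s - t)))) * |g s - w' s| := by ring
          _ ≤ (r * ε) * (r * Real.exp (-(r * (s - t)))) + (r * 1) * |g s - w' s| := by
              gcongr
          _ = (r * ε) * (r * Real.exp (-(r * (s - t)))) + r * |g s - w' s| := by rw [mul_one]
      calc |∫ s in Ioi t, (r * Real.exp (-(r * (s - t))) * ((1 - g s) * Real.exp (-(r * A s))) -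
              r * Real.exp (-(r * (s - t))) * ((1 - w' s) * Real.exp (-(r * Aw s))))|
          ≤ ∫ s in Ioi t, |r * Real.exp (-(r * (s - t))) * ((1 - g s) * Real.exp (-(r * A s))) -
              r * Real.exp (-(r * (s - t))) * ((1 - w' s) * Real.exp (-(r * Aw s)))| := by
            simpa [Real.norm_eq_abs] using norm_integral_le_integral_norm
              (μ := volume.restrict (Ioi t)) (fun s => r * Real.exp (-(r * (s - t))) *
                ((1 - g s) * Real.exp (-(r * A s))) -
                r * Real.exp (-(r * (s - t))) * ((1 - w' s) * Real.exp (-(r * Aw s))))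
        _ ≤ ∫ s in Ioi t, ((r * ε) * (r * Real.exp (-(r * (s - t)))) + r * |g s - w' s|) :=
            setIntegral_mono_on ((hFgint.sub hFwint).abs) (hb1.add hb2) measurableSet_Ioi hptw
        _ = (r * ε) * (∫ s in Ioi t, r * Real.exp (-(r * (s - t))))
            + r * ∫ s in Ioi t, |g s - w' s| := by
            rw [integral_add hb1 hb2]; simp only [integral_const_mul]
        _ ≤ (r * ε) * 1 + r * ε := by
            gcongr
            · rw [hone]
            · exact le_trans (setIntegral_le_integral ((hgi.sub hw'i).abs)
                (Eventually.of_forall fun u => abs_nonneg _)) hδle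
        _ = 2 * r * ε := by ring
    calc |(∫ s in Ioi t, r * Real.exp (-(r * (s - t))) * ((1 - g s) * Real.exp (-(r * A s))))
          - Real.exp (-(r * A t))|
        ≤ |(∫ s in Ioi t, r * Real.exp (-(r * (s - t))) * ((1 - g s) * Real.exp (-(r * A s))))
            - (∫ s in Ioi t, r * Real.exp (-(r * (s - t))) * ((1 - w' s) * Real.exp (-(r * Aw s))))|
          + |(∫ s in Ioi t, r * Real.exp (-(r * (s - t))) * ((1 - w' s) * Real.exp (-(r * Aw s))))
            - Real.exp (-(r * A t))| := abs_sub_le _ _ _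
      _ ≤ 2 * r * ε + r * ε := by
          refine add_le_add hdiff ?_
          rw [hcont, abs_sub_comm]
          exact est2 t
      _ = 3 * r * ε := by ring
  set L := ∫ s in Ioi t, r * Real.exp (-(r * (s - t))) * ((1 - g s) * Real.exp (-(r * A s))) with hLdef
  have habs : |L - Real.exp (-(r * A t))| = 0 := by
    by_contra hne
    have hpos : 0 < |L - Real.exp (-(r * A t))| := (abs_nonneg _).lt_of_ne (Ne.symm hne)
    have hk := key (|L - Real.exp (-(r * A t))| / (6 * r)) (by positivity)
    have h6 : 3 * r * (|L - Real.exp (-(r * A t))| / (6 * r))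
        = |L - Real.exp (-(r * A t))| / 2 := by field_simp; ring
    rw [h6] at hk; linarith
  have := abs_eq_zero.mp habs
  linarith


/-- Extension of `1 - f` by zero outside the positive axis. -/
noncomputable def gext (f : ℝ → ℝ) : ℝ → ℝ := fun x => if 0 < x then 1 - f x else 0

/-- Tail integral of `gext f`. -/
noncomputable def Aint (f : ℝ → ℝ) (s : ℝ) : ℝ := ∫ u in Ioi s, gext f u

/-- The function `H`. -/
noncomputable def Hfun (r : ℝ) (f : ℝ → ℝ) (s : ℝ) : ℝ := Real.exp (-(r * Aint f s))

variable {f : ℝ → ℝ}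

lemma gext_meas (hf : Measurable f) : Measurable (gext f) :=
  Measurable.ite measurableSet_Ioi (measurable_const.sub hf) measurable_const

lemma gext_nonneg (hf0 : ∀ x, 0 ≤ x → 0 ≤ f x) (hf1 : ∀ x, 0 ≤ x → f x ≤ 1) (x : ℝ) :
    0 ≤ gext f x := by
  unfold gext; split_ifs with h
  · linarith [hf1 x h.le]
  · exact le_rfl

lemma gext_le_one (hf0 : ∀ x, 0 ≤ x → 0 ≤ f x) (x : ℝ) : gext f x ≤ 1 := by
  unfold gext; split_ifs with h
  · linarith [hf0 x h.le]
  · exact zero_le_one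

lemma lintegral_ofReal_gext (hf : Measurable f) :
    ∫⁻ x, ENNReal.ofReal (gext f x) = ∫⁻ x in Ioi (0:ℝ), ENNReal.ofReal (1 - f x) := by
  rw [← lintegral_add_compl (fun x => ENNReal.ofReal (gext f x)) measurableSet_Ioi]
  have h1 : ∫⁻ x in (Ioi (0:ℝ))ᶜ, ENNReal.ofReal (gext f x) = 0 := by
    have hz : ∀ x ∈ (Ioi (0:ℝ))ᶜ, ENNReal.ofReal (gext f x) = 0 := fun x hx => by
      simp only [gext, if_neg (by simpa using hx : ¬ 0 < x)]; simp
    rw [setLIntegral_congr_fun (g := fun _ => 0) measurableSet_Ioi.compl hz,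
      lintegral_zero]
  have h2 : ∫⁻ x in Ioi (0:ℝ), ENNReal.ofReal (gext f x)
      = ∫⁻ x in Ioi (0:ℝ), ENNReal.ofReal (1 - f x) :=
    setLIntegral_congr_fun measurableSet_Ioi
      (fun x (hx : 0 < x) => by simp only [gext, if_pos hx])
  rw [h1, h2, add_zero]

lemma integrable_gext (hf : Measurable f) (hf0 : ∀ x, 0 ≤ x → 0 ≤ f x)
    (hf1 : ∀ x, 0 ≤ x → f x ≤ 1)
    (hfin : (∫⁻ x in Ioi (0:ℝ), ENNReal.ofReal (1 - f x)) ≠ ⊤) :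
    Integrable (gext f) := by
  refine ⟨(gext_meas hf).aestronglyMeasurable, ?_⟩
  rw [hasFiniteIntegral_iff_ofReal (ae_of_all _ (gext_nonneg hf0 hf1)),
    lintegral_ofReal_gext hf]
  exact lt_top_iff_ne_top.2 hfin

lemma Aint_nonneg (hf0 : ∀ x, 0 ≤ x → 0 ≤ f x) (hf1 : ∀ x, 0 ≤ x → f x ≤ 1) (s : ℝ) :
    0 ≤ Aint f s :=
  setIntegral_nonneg measurableSet_Ioi (fun u _ => gext_nonneg hf0 hf1 u)

lemma Hfun_le_one (hf0 : ∀ x, 0 ≤ x → 0 ≤ f x) (hf1 : ∀ x, 0 ≤ x → f x ≤ 1) {r : ℝ}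
    (hr : 0 < r) (s : ℝ) : Hfun r f s ≤ 1 :=
  Real.exp_le_one_iff.2 (neg_nonpos.2 (mul_nonneg hr.le (Aint_nonneg hf0 hf1 s)))

lemma Hfun_pos {r : ℝ} (s : ℝ) : 0 < Hfun r f s := Real.exp_pos _

lemma Aint_anti (hf0 : ∀ x, 0 ≤ x → 0 ≤ f x) (hf1 : ∀ x, 0 ≤ x → f x ≤ 1)
    (hgi : Integrable (gext f)) : Antitone (Aint f) := by
  intro a b hab
  exact setIntegral_mono_set hgi.integrableOn
    (Eventually.of_forall fun u => gext_nonneg hf0 hf1 u) (Ioi_subset_Ioi hab).eventuallyLE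

lemma Hfun_meas (hf0 : ∀ x, 0 ≤ x → 0 ≤ f x) (hf1 : ∀ x, 0 ≤ x → f x ≤ 1)
    (hgi : Integrable (gext f)) {r : ℝ} : Measurable (Hfun r f) :=
  (Real.continuous_exp.measurable).comp
    (((Aint_anti hf0 hf1 hgi).measurable.const_mul r).neg)

lemma Aint_eq_toReal (hf : Measurable f) (hf0 : ∀ x, 0 ≤ x → 0 ≤ f x)
    (hf1 : ∀ x, 0 ≤ x → f x ≤ 1) {s : ℝ} (hs : 0 ≤ s) :
    Aint f s = (∫⁻ x in Ioi s, ENNReal.ofReal (1 - f x)).toReal := by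
  rw [Aint, integral_eq_lintegral_of_nonneg_ae
    (ae_of_all _ (fun u => gext_nonneg hf0 hf1 u)) (gext_meas hf).aestronglyMeasurable]
  congr 1
  refine setLIntegral_congr_fun measurableSet_Ioi (fun x hx => ?_)
  simp only [gext, if_pos (lt_of_le_of_lt hs hx)]

lemma expMeasure_eq {r : ℝ} :
    expMeasure r = volume.withDensity (exponentialPDF r) := rfl

lemma measurable_exponentialPDF (r : ℝ) : Measurable (exponentialPDF r) :=
  ENNReal.measurable_ofReal.comp (measurable_exponentialPDFReal r)

/-- Fixed point property of `Hfun` for the exponential kernel. -/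
lemma key_fix {r : ℝ} (hr : 0 < r) (hf : Measurable f) (hf0 : ∀ x, 0 ≤ x → 0 ≤ f x)
    (hf1 : ∀ x, 0 ≤ x → f x ≤ 1)
    (hfin : (∫⁻ x in Ioi (0:ℝ), ENNReal.ofReal (1 - f x)) ≠ ⊤)
    {t : ℝ} (ht : 0 ≤ t) :
    ∫⁻ y, ENNReal.ofReal (f (t + y)) * ENNReal.ofReal (Hfun r f (t + y)) ∂(expMeasure r)
      = ENNReal.ofReal (Hfun r f t) := by
  have hgi : Integrable (gext f) := integrable_gext hf hf0 hf1 hfin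
  have hHm : Measurable (Hfun r f) := Hfun_meas hf0 hf1 hgi
  have hFm : Measurable (fun y => ENNReal.ofReal (f (t + y)) *
      ENNReal.ofReal (Hfun r f (t + y))) := by
    have hadd : Measurable (fun y : ℝ => t + y) := measurable_const.add measurable_id
    exact ((ENNReal.measurable_ofReal.comp (hf.comp hadd)).mul
      (ENNReal.measurable_ofReal.comp (hHm.comp hadd)))
  rw [expMeasure_eq, lintegral_withDensity_eq_lintegral_mul _ (measurable_exponentialPDF r) hFm]
  simp only [Pi.mul_apply]
  set G : ℝ → ℝ≥0∞ := fun y => exponentialPDF r y *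
    (ENNReal.ofReal (f (t + y)) * ENNReal.ofReal (Hfun r f (t + y))) with hG
  have hsplit : ∫⁻ y, G y = ∫⁻ y in Ioi (0:ℝ), G y := by
    rw [← lintegral_add_compl G measurableSet_Ioi]
    have h0 : ∫⁻ y in (Ioi (0:ℝ))ᶜ, G y = 0 := by
      rw [compl_Ioi, ← setLIntegral_congr Iio_ae_eq_Iic]
      have hz : ∀ y ∈ Iio (0:ℝ), G y = 0 := fun y hy => by
        rw [hG]; dsimp only; rw [exponentialPDF_of_neg hy, zero_mul]
      rw [setLIntegral_congr_fun (g := fun _ => 0) measurableSet_Iio hz,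
        lintegral_zero]
    rw [h0, add_zero]
  set ρ : ℝ → ℝ := fun s => r * Real.exp (-(r * (s - t))) *
    ((1 - gext f s) * Real.exp (-(r * Aint f s))) with hρ
  have hρm : Measurable ρ := by
    refine (measurable_const.mul (((measurable_id.sub_const t).const_mul r).neg.exp)).mul
      ((measurable_const.sub (gext_meas hf)).mul
        (((Aint_anti hf0 hf1 hgi).measurable.const_mul r).neg.exp))
  have hρ0 : ∀ s, 0 ≤ ρ s := by
    intro s
    have := gext_le_one (f := f) hf0 s
    have := gext_nonneg (f := f) hf0 hf1 s
    have := Real.exp_pos (-(r * Aint f s))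
    have := Real.exp_pos (-(r * (s - t)))
    rw [hρ]; dsimp only
    exact mul_nonneg (by positivity) (mul_nonneg (by linarith) (by positivity))
  have hGρ : ∀ y ∈ Ioi (0:ℝ), G y = ENNReal.ofReal (ρ (t + y)) := by
    intro y hy
    have hy0 : (0:ℝ) < y := hy
    have hty : (0:ℝ) < t + y := by linarith
    rw [hG]; dsimp only
    rw [exponentialPDF_of_nonneg hy0.le, ← ENNReal.ofReal_mul (hf0 _ hty.le),
      ← ENNReal.ofReal_mul (by positivity : (0:ℝ) ≤ r * Real.exp (-(r * y)))]
    congr 1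
    have h1 : gext f (t + y) = 1 - f (t + y) := by simp only [gext, if_pos hty]
    rw [hρ]; dsimp only
    rw [h1, Hfun]
    ring_nf
  have hρint : IntegrableOn (fun y => ρ (t + y)) (Ioi (0:ℝ)) := by
    have hmaj : IntegrableOn (fun y : ℝ => r * Real.exp (-r * y)) (Ioi (0:ℝ)) :=
      (exp_neg_integrableOn_Ioi 0 hr).const_mul r
    apply Integrable.mono' hmaj
    · exact (hρm.comp (measurable_const.add measurable_id)).aestronglyMeasurable.restrict
    · filter_upwards [ae_restrict_mem measurableSet_Ioi] with y hy
      have hy0 : (0:ℝ) < y := hy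
      have hty : (0:ℝ) < t + y := by linarith
      rw [Real.norm_eq_abs, abs_of_nonneg (hρ0 _)]
      have e1 : (1 - gext f (t + y)) * Real.exp (-(r * Aint f (t + y))) ≤ 1 :=
        mul_le_one₀ (by linarith [gext_nonneg (f := f) hf0 hf1 (t + y)]) (Real.exp_pos _).le
          (Real.exp_le_one_iff.2 (neg_nonpos.2 (mul_nonneg hr.le (Aint_nonneg hf0 hf1 _))))
      have e2 : Real.exp (-(r * (t + y - t))) = Real.exp (-r * y) := by ring_nf
      rw [hρ]; dsimp only
      rw [e2]
      calc r * Real.exp (-r * y) * ((1 - gext f (t + y)) * Real.exp (-(r * Aint f (t + y))))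
          ≤ r * Real.exp (-r * y) * 1 := mul_le_mul_of_nonneg_left e1 (by positivity)
        _ = r * Real.exp (-r * y) := mul_one _
  have hconv : ∫⁻ y in Ioi (0:ℝ), G y = ENNReal.ofReal (∫ y in Ioi (0:ℝ), ρ (t + y)) := by
    rw [setLIntegral_congr_fun measurableSet_Ioi hGρ]
    rw [← ofReal_integral_eq_lintegral_ofReal hρint
      (ae_of_all _ (fun y => hρ0 (t + y)))]
  have htrans : ∫ y in Ioi (0:ℝ), ρ (t + y) = ∫ s in Ioi t, ρ s := by
    have hmp : MeasurePreserving (fun y : ℝ => t + y) volume volume :=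
      measurePreserving_add_left volume t
    have hemb : MeasurableEmbedding (fun y : ℝ => t + y) :=
      (MeasurableEquiv.addLeft t).measurableEmbedding
    have hpre : (fun y : ℝ => t + y) ⁻¹' (Ioi t) = Ioi (0:ℝ) := by
      ext y; simp [mem_Ioi]
    rw [← hmp.setIntegral_preimage_emb hemb ρ (Ioi t), hpre]
  have hkey := key_meas hr (gext_meas hf) (gext_nonneg hf0 hf1) (gext_le_one hf0) hgi t
  rw [hsplit, hconv, htrans]
  rw [show (∫ s in Ioi t, ρ s) = Real.exp (-(r * ∫ u in Ioi t, gext f u)) from hkey]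
  rfl

section Prob

variable {Ω : Type*} [MeasureSpace Ω] [IsProbabilityMeasure (ℙ : Measure Ω)]

lemma iIndepFun_congr_ae {E E' : ℕ → Ω → ℝ}
    (h : iIndepFun E ℙ) (heq : ∀ k, E k =ᵐ[ℙ] E' k) :
    iIndepFun E' ℙ := by
  rw [iIndepFun_iff_measure_inter_preimage_eq_mul] at h ⊢
  intro S sets hsets
  have hall : ∀ᵐ ω ∂ℙ, ∀ i, E i ω = E' i ω := ae_all_iff.2 (fun i => heq i)
  have h3 : ℙ (⋂ i ∈ S, E' i ⁻¹' sets i) = ℙ (⋂ i ∈ S, E i ⁻¹' sets i) := by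
    refine measure_congr (Filter.eventuallyEq_set.2 ?_)
    filter_upwards [hall] with ω hω
    simp only [mem_iInter, mem_preimage]
    constructor
    · intro hmem i hi; rw [hω i]; exact hmem i hi
    · intro hmem i hi; rw [← hω i]; exact hmem i hi
  have h4 : ∀ i ∈ S, ℙ (E' i ⁻¹' sets i) = ℙ (E i ⁻¹' sets i) := by
    intro i hi
    refine measure_congr (Filter.eventuallyEq_set.2 ?_)
    filter_upwards [heq i] with ω hω
    simp only [mem_preimage, hω]
  rw [h3, Finset.prod_congr rfl h4]
  exact h S hsets

lemma indep_lintegral_eq {α β : Type*} [MeasurableSpace α] [MeasurableSpace β]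
    {U : Ω → α} {Y : Ω → β} (hU : Measurable U) (hY : Measurable Y)
    (h : IndepFun U Y ℙ) {Θ : α × β → ℝ≥0∞} (hΘ : Measurable Θ) :
    ∫⁻ ω, Θ (U ω, Y ω) ∂ℙ = ∫⁻ ω, ∫⁻ y, Θ (U ω, y) ∂(Measure.map Y ℙ) ∂ℙ := by
  haveI : IsFiniteMeasure (Measure.map Y ℙ) :=
    ⟨by rw [Measure.map_apply hY MeasurableSet.univ]; exact measure_lt_top _ _⟩
  have hmap := (indepFun_iff_map_prod_eq_prod_map_map hU.aemeasurable hY.aemeasurable).1 h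
  calc ∫⁻ ω, Θ (U ω, Y ω) ∂ℙ
      = ∫⁻ p, Θ p ∂(Measure.map (fun ω => (U ω, Y ω)) ℙ) :=
        (lintegral_map hΘ (hU.prodMk hY)).symm
    _ = ∫⁻ p, Θ p ∂((Measure.map U ℙ).prod (Measure.map Y ℙ)) := by rw [hmap]
    _ = ∫⁻ u, ∫⁻ y, Θ (u, y) ∂(Measure.map Y ℙ) ∂(Measure.map U ℙ) :=
        lintegral_prod _ hΘ.aemeasurable
    _ = ∫⁻ ω, ∫⁻ y, Θ (U ω, y) ∂(Measure.map Y ℙ) ∂ℙ :=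
        lintegral_map (hΘ.lintegral_prod_right') hU

lemma ae_nonneg_of_exp {r : ℝ} {E : ℕ → Ω → ℝ} (hEm : ∀ k, Measurable (E k))
    (hE : ∀ k, Measure.map (E k) ℙ = expMeasure r) :
    ∀ᵐ ω ∂ℙ, ∀ k, 0 ≤ E k ω := by
  rw [ae_all_iff]
  intro k
  rw [ae_iff]
  have hset : {ω | ¬ 0 ≤ E k ω} = E k ⁻¹' (Iio 0) := by
    ext ω; simp [not_le]
  rw [hset, ← Measure.map_apply (hEm k) measurableSet_Iio, hE k, expMeasure_eq,
    withDensity_apply _ measurableSet_Iio]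
  exact lintegral_exponentialPDF_of_nonpos le_rfl

/-- The core martingale-type identity. -/
lemma core_identity {r : ℝ} {E : ℕ → Ω → ℝ} (hEm : ∀ k, Measurable (E k))
    (hindep : iIndepFun E ℙ)
    (hE : ∀ k, Measure.map (E k) ℙ = expMeasure r)
    {f : ℝ → ℝ} (hf : Measurable f)
    {φ : ℝ → ℝ≥0∞} (hφ : Measurable φ)
    (hfix : ∀ t, 0 ≤ t →
      ∫⁻ y, ENNReal.ofReal (f (t + y)) * φ (t + y) ∂(expMeasure r) = φ t) :
    ∀ n, ∫⁻ ω, (∏ k ∈ Finset.range n,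
          ENNReal.ofReal (f (∑ i ∈ Finset.range (k+1), E i ω)))
        * φ (∑ i ∈ Finset.range n, E i ω) ∂ℙ = φ 0 := by
  have hae := ae_nonneg_of_exp hEm hE
  intro n
  induction n with
  | zero => simp
  | succ n ih =>
    set S : Ω → ℝ := fun ω => ∑ i ∈ Finset.range n, E i ω with hS
    have hSm : Measurable S := Finset.measurable_sum _ (fun i _ => hEm i)
    set P : Ω → ℝ≥0∞ := fun ω => ∏ k ∈ Finset.range n,
      ENNReal.ofReal (f (∑ i ∈ Finset.range (k+1), E i ω)) with hP
    have hPm : Measurable P :=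
      Finset.measurable_prod _ (fun k _ => ENNReal.measurable_ofReal.comp
        (hf.comp (Finset.measurable_sum _ (fun i _ => hEm i))))
    set Θ : (ℝ≥0∞ × ℝ) × ℝ → ℝ≥0∞ := fun q =>
      q.1.1 * (ENNReal.ofReal (f (q.1.2 + q.2)) * φ (q.1.2 + q.2)) with hΘ
    have hqm : Measurable (fun q : (ℝ≥0∞ × ℝ) × ℝ => q.1.2 + q.2) :=
      (measurable_snd.comp measurable_fst).add measurable_snd
    have hΘm : Measurable Θ :=
      (measurable_fst.comp measurable_fst).mul
        ((ENNReal.measurable_ofReal.comp (hf.comp hqm)).mul (hφ.comp hqm))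
    have hUi : IndepFun (fun ω => (P ω, S ω)) (E n) ℙ := by
      have h1 := hindep.indepFun_finset (Finset.range n) {n}
        (by simp [Finset.disjoint_left]; omega) hEm
      set u : ({ x // x ∈ Finset.range n } → ℝ) → ℝ≥0∞ × ℝ := fun v =>
        (∏ k ∈ Finset.range n, ENNReal.ofReal (f (∑ i ∈ Finset.range (k+1),
            if h : i ∈ Finset.range n then v ⟨i, h⟩ else 0)),
         ∑ i ∈ Finset.range n, if h : i ∈ Finset.range n then v ⟨i, h⟩ else 0) with hu_def
      set pr : ({ x // x ∈ ({n} : Finset ℕ) } → ℝ) → ℝ :=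
        fun v => v ⟨n, by simp⟩ with hpr_def
      have hw : ∀ i : ℕ, Measurable (fun v : { x // x ∈ Finset.range n } → ℝ =>
          if h : i ∈ Finset.range n then v ⟨i, h⟩ else 0) := by
        intro i
        by_cases h : i ∈ Finset.range n
        · simpa [h] using (measurable_pi_apply (⟨i, h⟩ : { x // x ∈ Finset.range n }))
        · simpa [h] using (measurable_const :
            Measurable (fun _ : { x // x ∈ Finset.range n } → ℝ => (0:ℝ)))
      have hu : Measurable u := by
        rw [hu_def]
        apply Measurable.prod
        · dsimp only
          exact Finset.measurable_prod _ (fun k _ => ENNReal.measurable_ofReal.comp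
            (hf.comp (Finset.measurable_sum _ (fun i _ => hw i))))
        · dsimp only
          exact Finset.measurable_sum _ (fun i _ => hw i)
      have hpr : Measurable pr := measurable_pi_apply _
      have h2 := h1.comp hu hpr
      have he1 : (u ∘ fun a (i : { x // x ∈ Finset.range n }) => E i a)
          = fun ω => (P ω, S ω) := by
        funext ω
        simp only [Function.comp, hu_def]
        have hsum : ∀ m : ℕ, m ≤ n → (∑ i ∈ Finset.range m,
            if h : i ∈ Finset.range n then E i ω else 0) = ∑ i ∈ Finset.range m, E i ω := by
          intro m hm
          refine Finset.sum_congr rfl (fun i hi => ?_)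
          rw [dif_pos (Finset.mem_range.2 (lt_of_lt_of_le (Finset.mem_range.1 hi) hm))]
        refine Prod.ext ?_ ?_
        · dsimp only
          refine Finset.prod_congr rfl (fun k hk => ?_)
          rw [hsum (k+1) (Nat.succ_le_of_lt (Finset.mem_range.1 hk))]
        · dsimp only
          exact hsum n le_rfl
      have he2 : (pr ∘ fun a (i : { x // x ∈ ({n} : Finset ℕ) }) => E i a) = E n := by
        funext ω; simp [hpr_def, Function.comp]
      rw [he1, he2] at h2
      exact h2
    have hstep := indep_lintegral_eq (hPm.prodMk hSm) (hEm n) hUi hΘm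
    calc ∫⁻ ω, (∏ k ∈ Finset.range (n+1),
            ENNReal.ofReal (f (∑ i ∈ Finset.range (k+1), E i ω)))
          * φ (∑ i ∈ Finset.range (n+1), E i ω) ∂ℙ
        = ∫⁻ ω, Θ ((P ω, S ω), E n ω) ∂ℙ := by
          refine lintegral_congr (fun ω => ?_)
          rw [hΘ]; dsimp only
          rw [Finset.prod_range_succ, Finset.sum_range_succ]
          ring
      _ = ∫⁻ ω, ∫⁻ y, Θ ((P ω, S ω), y) ∂(Measure.map (E n) ℙ) ∂ℙ := hstep
      _ = ∫⁻ ω, P ω * φ (S ω) ∂ℙ := by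
          refine lintegral_congr_ae ?_
          filter_upwards [hae] with ω hω
          have hS0 : 0 ≤ S ω := Finset.sum_nonneg (fun i _ => hω i)
          rw [hE n, hΘ]
          dsimp only
          rw [lintegral_const_mul _ (by fun_prop :
            Measurable fun y : ℝ => ENNReal.ofReal (f (S ω + y)) * φ (S ω + y))]
          rw [hfix (S ω) hS0]
      _ = φ 0 := ih

end Prob

lemma iInf_pow_eq_zero {c : ℝ≥0∞} (hc : c < 1) : ⨅ n : ℕ, c ^ n = 0 := by
  have htend : Tendsto (fun n : ℕ => c ^ n) atTop (𝓝 0) :=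
    ENNReal.tendsto_pow_atTop_nhds_zero_of_lt_one hc
  have hanti : Antitone (fun n : ℕ => c ^ n) :=
    fun m n hmn => pow_le_pow_right_of_le_one' hc.le hmn
  exact tendsto_nhds_unique (tendsto_atTop_iInf hanti) htend

lemma Aint_tendsto {f : ℝ → ℝ} (hgi : Integrable (gext f)) :
    Tendsto (Aint f) atTop (𝓝 0) := by
  have heq : (Aint f) = fun s => ∫ u, (Ioi s).indicator (gext f) u := by
    funext s; rw [Aint, integral_indicator measurableSet_Ioi]
  rw [heq]
  have h0 : (0:ℝ) = ∫ (u : ℝ), (0:ℝ) := by simp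
  rw [h0]
  refine tendsto_integral_filter_of_dominated_convergence (fun u => |gext f u|)
    (Eventually.of_forall (fun s => (hgi.1.indicator measurableSet_Ioi))) ?_ hgi.abs ?_
  · refine Eventually.of_forall (fun s => Eventually.of_forall (fun u => ?_))
    exact norm_indicator_le_norm_self _ _
  · refine Eventually.of_forall (fun u => ?_)
    refine Tendsto.congr' ?_ tendsto_const_nhds
    filter_upwards [eventually_ge_atTop u] with s hs
    exact (indicator_of_notMem (by simpa using hs) _).symm

section Prob2

variable {Ω : Type*} [MeasureSpace Ω] [IsProbabilityMeasure (ℙ : Measure Ω)]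

lemma lintegral_exp_neg_expMeasure {r : ℝ} (hr : 0 < r) :
    ∫⁻ y, ENNReal.ofReal (Real.exp (-y)) ∂(expMeasure r) = ENNReal.ofReal (r / (r+1)) := by
  have hmexp : Measurable fun y : ℝ => ENNReal.ofReal (Real.exp (-y)) :=
    ENNReal.measurable_ofReal.comp (Real.continuous_exp.measurable.comp measurable_neg)
  rw [expMeasure_eq, lintegral_withDensity_eq_lintegral_mul _ (measurable_exponentialPDF r) hmexp]
  simp only [Pi.mul_apply]
  have hpt : ∀ y : ℝ, exponentialPDF r y * ENNReal.ofReal (Real.exp (-y))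
      = ENNReal.ofReal (r / (r+1)) * exponentialPDF (r+1) y := by
    intro y
    rcases lt_or_ge y 0 with hy | hy
    · rw [exponentialPDF_of_neg hy, exponentialPDF_of_neg hy, zero_mul, mul_zero]
    · rw [exponentialPDF_of_nonneg hy, exponentialPDF_of_nonneg hy,
        ← ENNReal.ofReal_mul (by positivity), ← ENNReal.ofReal_mul (by positivity)]
      congr 1
      rw [mul_assoc, ← Real.exp_add]
      rw [show -(r * y) + -y = -((r+1) * y) by ring]
      field_simp
  rw [lintegral_congr hpt, lintegral_const_mul _ (measurable_exponentialPDF (r+1)),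
    lintegral_exponentialPDF_eq_one (by linarith : (0:ℝ) < r + 1), mul_one]

lemma tendsto_sums_atTop {r : ℝ} (hr : 0 < r) {E : ℕ → Ω → ℝ} (hEm : ∀ k, Measurable (E k))
    (hindep : iIndepFun E ℙ)
    (hE : ∀ k, Measure.map (E k) ℙ = expMeasure r) :
    ∀ᵐ ω ∂ℙ, Tendsto (fun n => ∑ i ∈ Finset.range n, E i ω) atTop atTop := by
  set c := ENNReal.ofReal (r / (r+1)) with hc
  have hc1 : c < 1 := by
    rw [hc, ← ENNReal.ofReal_one]
    refine (ENNReal.ofReal_lt_ofReal_iff zero_lt_one).2 ?_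
    rw [div_lt_one (by linarith)]; linarith
  set G : ℕ → Ω → ℝ≥0∞ := fun k ω => ENNReal.ofReal (Real.exp (-(E k ω))) with hG
  have hGm : ∀ k, Measurable (G k) := fun k =>
    ENNReal.measurable_ofReal.comp (Real.continuous_exp.measurable.comp (hEm k).neg)
  have hGc : ∀ k, ∫⁻ ω, G k ω ∂ℙ = c := by
    intro k
    have hmexp : Measurable fun y : ℝ => ENNReal.ofReal (Real.exp (-y)) :=
      ENNReal.measurable_ofReal.comp (Real.continuous_exp.measurable.comp measurable_neg)
    have h1 : ∫⁻ ω, G k ω ∂ℙ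
        = ∫⁻ x, ENNReal.ofReal (Real.exp (-x)) ∂(Measure.map (E k) ℙ) :=
      (lintegral_map hmexp (hEm k)).symm
    rw [h1, hE k, lintegral_exp_neg_expMeasure hr]
  have hGindep : iIndepFun G ℙ :=
    hindep.comp (fun _ x => ENNReal.ofReal (Real.exp (-x)))
      (fun _ => ENNReal.measurable_ofReal.comp (Real.continuous_exp.measurable.comp measurable_neg))
  have hprod : ∀ n, ∫⁻ ω, ∏ k ∈ Finset.range n, G k ω ∂ℙ = c ^ n := by
    intro n
    induction n with
    | zero => simp
    | succ n ih =>
      have hind2 := hGindep.indepFun_prod_range_succ hGm n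
      have hMf : Measurable (∏ k ∈ Finset.range n, G k) := by
        rw [Finset.prod_fn]
        exact Finset.measurable_prod _ (fun k _ => hGm k)
      have hmul := lintegral_mul_eq_lintegral_mul_lintegral_of_indepFun hMf (hGm n) hind2
      calc ∫⁻ ω, ∏ k ∈ Finset.range (n+1), G k ω ∂ℙ
          = ∫⁻ ω, (∏ k ∈ Finset.range n, G k) ω * G n ω ∂ℙ := by
            refine lintegral_congr (fun ω => ?_)
            rw [Finset.prod_range_succ, Finset.prod_apply]
        _ = (∫⁻ ω, (∏ k ∈ Finset.range n, G k) ω ∂ℙ) * ∫⁻ ω, G n ω ∂ℙ := hmul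
        _ = c ^ n * c := by
            rw [hGc n]
            congr 1
            rw [← ih]
            exact lintegral_congr (fun ω => by rw [Finset.prod_apply])
        _ = c ^ (n+1) := by ring
  have hinf0 : (fun ω => ⨅ n, ENNReal.ofReal
      (Real.exp (-(∑ i ∈ Finset.range n, E i ω)))) =ᵐ[ℙ] 0 := by
    have hmeas : Measurable (fun ω => ⨅ n, ENNReal.ofReal
        (Real.exp (-(∑ i ∈ Finset.range n, E i ω)))) := by
      refine Measurable.iInf (fun n => ?_)
      exact ENNReal.measurable_ofReal.comp (Real.continuous_exp.measurable.comp
        ((Finset.measurable_sum _ (fun i _ => hEm i)).neg))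
    rw [← lintegral_eq_zero_iff hmeas]
    refine le_antisymm ?_ (zero_le)
    have hle : ∀ n, ∫⁻ ω, (⨅ m, ENNReal.ofReal
        (Real.exp (-(∑ i ∈ Finset.range m, E i ω)))) ∂ℙ ≤ c ^ n := by
      intro n
      rw [← hprod n]
      refine lintegral_mono (fun ω => ?_)
      refine le_trans (iInf_le _ n) (le_of_eq ?_)
      rw [show -(∑ i ∈ Finset.range n, E i ω) = ∑ i ∈ Finset.range n, -(E i ω) by
        rw [← Finset.sum_neg_distrib], Real.exp_sum]
      exact ENNReal.ofReal_prod_of_nonneg (fun i _ => (Real.exp_pos _).le)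
    rw [← iInf_pow_eq_zero hc1]
    exact le_iInf hle
  filter_upwards [hinf0, ae_nonneg_of_exp hEm hE] with ω h0 hpos
  have h0' : (⨅ n, ENNReal.ofReal (Real.exp (-(∑ i ∈ Finset.range n, E i ω)))) = 0 := h0
  have hmono : Monotone (fun n => ∑ i ∈ Finset.range n, E i ω) := by
    intro m n hmn
    exact Finset.sum_le_sum_of_subset_of_nonneg (Finset.range_subset_range.2 hmn)
      (fun i _ _ => hpos i)
  refine tendsto_atTop_atTop_of_monotone hmono ?_
  intro M
  have hM : (0:ℝ≥0∞) < ENNReal.ofReal (Real.exp (-M)) :=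
    ENNReal.ofReal_pos.2 (Real.exp_pos _)
  rw [← h0'] at hM
  obtain ⟨n, hn⟩ := iInf_lt_iff.1 hM
  refine ⟨n, ?_⟩
  have h2 := (ENNReal.ofReal_lt_ofReal_iff (Real.exp_pos _)).1 hn
  have h3 := Real.exp_lt_exp.1 h2
  linarith

/-- The finite case: convergence of the partial-product expectations. -/
lemma finite_case {r : ℝ} (hr : 0 < r) {E : ℕ → Ω → ℝ} (hEm : ∀ k, Measurable (E k))
    (hindep : iIndepFun E ℙ)
    (hE : ∀ k, Measure.map (E k) ℙ = expMeasure r)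
    {f : ℝ → ℝ} (hf : Measurable f) (hf0 : ∀ x, 0 ≤ x → 0 ≤ f x)
    (hf1 : ∀ x, 0 ≤ x → f x ≤ 1)
    (hfin : (∫⁻ x in Ioi (0:ℝ), ENNReal.ofReal (1 - f x)) ≠ ⊤) :
    Tendsto (fun n => ∫⁻ ω, ∏ k ∈ Finset.range n,
        ENNReal.ofReal (f (∑ i ∈ Finset.range (k+1), E i ω)) ∂ℙ) atTop
      (𝓝 (ENNReal.ofReal (Hfun r f 0))) := by
  have hgi : Integrable (gext f) := integrable_gext hf hf0 hf1 hfin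
  have hHm : Measurable (Hfun r f) := Hfun_meas hf0 hf1 hgi
  have hφm : Measurable (fun t => ENNReal.ofReal (Hfun r f t)) :=
    ENNReal.measurable_ofReal.comp hHm
  have hcore := core_identity hEm hindep hE hf hφm
    (fun t ht => key_fix hr hf hf0 hf1 hfin ht)
  have hae := ae_nonneg_of_exp hEm hE
  have hPm : ∀ n, Measurable (fun ω => ∏ k ∈ Finset.range n,
      ENNReal.ofReal (f (∑ i ∈ Finset.range (k+1), E i ω))) := fun n =>
    Finset.measurable_prod _ (fun k _ => ENNReal.measurable_ofReal.comp
      (hf.comp (Finset.measurable_sum _ (fun i _ => hEm i))))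
  have hsplitn : ∀ n, ∫⁻ ω, ∏ k ∈ Finset.range n,
        ENNReal.ofReal (f (∑ i ∈ Finset.range (k+1), E i ω)) ∂ℙ
      = ENNReal.ofReal (Hfun r f 0)
        + ∫⁻ ω, (∏ k ∈ Finset.range n, ENNReal.ofReal (f (∑ i ∈ Finset.range (k+1), E i ω)))
          * (1 - ENNReal.ofReal (Hfun r f (∑ i ∈ Finset.range n, E i ω))) ∂ℙ := by
    intro n
    have hm1 : Measurable fun ω : Ω => (∏ k ∈ Finset.range n,
        ENNReal.ofReal (f (∑ i ∈ Finset.range (k+1), E i ω)))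
        * ENNReal.ofReal (Hfun r f (∑ i ∈ Finset.range n, E i ω)) :=
      (hPm n).mul (hφm.comp (Finset.measurable_sum _ (fun i _ => hEm i)))
    rw [← hcore n, ← lintegral_add_left hm1]
    refine lintegral_congr (fun ω => ?_)
    rw [← mul_add, add_tsub_cancel_of_le
      (ENNReal.ofReal_le_one.2 (Hfun_le_one hf0 hf1 hr _)), mul_one]
  have hRtend : Tendsto (fun n => ∫⁻ ω, (∏ k ∈ Finset.range n,
        ENNReal.ofReal (f (∑ i ∈ Finset.range (k+1), E i ω)))
      * (1 - ENNReal.ofReal (Hfun r f (∑ i ∈ Finset.range n, E i ω))) ∂ℙ) atTop (𝓝 0) := by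
    have h0eq : (0:ℝ≥0∞) = ∫⁻ _ : Ω, 0 ∂ℙ := by simp
    rw [h0eq]
    refine tendsto_lintegral_of_dominated_convergence (fun _ => 1)
      (fun n => (hPm n).mul ((ENNReal.continuous_sub_left (by simp)).measurable.comp
        (hφm.comp (Finset.measurable_sum _ (fun i _ => hEm i))))) ?_ (by simp) ?_
    · intro n
      filter_upwards [hae] with ω hpos
      have hP1 : (∏ k ∈ Finset.range n, ENNReal.ofReal
          (f (∑ i ∈ Finset.range (k+1), E i ω))) ≤ 1 :=
        Finset.prod_le_one (fun k _ => zero_le) (fun k _ =>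
          ENNReal.ofReal_le_one.2 (hf1 _ (Finset.sum_nonneg (fun i _ => hpos i))))
      calc (∏ k ∈ Finset.range n, ENNReal.ofReal (f (∑ i ∈ Finset.range (k+1), E i ω)))
            * (1 - ENNReal.ofReal (Hfun r f (∑ i ∈ Finset.range n, E i ω)))
          ≤ 1 * 1 := mul_le_mul' hP1 tsub_le_self
        _ = 1 := one_mul _
    · filter_upwards [hae, tendsto_sums_atTop hr hEm hindep hE] with ω hpos hTtop
      have h1 : Tendsto (fun n => Aint f (∑ i ∈ Finset.range n, E i ω)) atTop (𝓝 0) :=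
        (Aint_tendsto hgi).comp hTtop
      have hc1 : Continuous (fun a : ℝ => (1:ℝ≥0∞)
          - ENNReal.ofReal (Real.exp (-(r * a)))) :=
        (ENNReal.continuous_sub_left (by simp)).comp
          (ENNReal.continuous_ofReal.comp (Real.continuous_exp.comp
            ((continuous_const.mul continuous_id).neg)))
      have h2 : Tendsto (fun n => (1:ℝ≥0∞)
          - ENNReal.ofReal (Hfun r f (∑ i ∈ Finset.range n, E i ω))) atTop (𝓝 0) := by
        have := (hc1.tendsto 0).comp h1
        simpa [Hfun, Function.comp_def] using this
      have hP1 : ∀ n, (∏ k ∈ Finset.range n, ENNReal.ofReal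
          (f (∑ i ∈ Finset.range (k+1), E i ω))) ≤ 1 := fun n =>
        Finset.prod_le_one (fun k _ => zero_le) (fun k _ =>
          ENNReal.ofReal_le_one.2 (hf1 _ (Finset.sum_nonneg (fun i _ => hpos i))))
      refine tendsto_of_tendsto_of_tendsto_of_le_of_le tendsto_const_nhds h2
        (fun n => zero_le) (fun n => ?_)
      calc (∏ k ∈ Finset.range n, ENNReal.ofReal (f (∑ i ∈ Finset.range (k+1), E i ω)))
            * (1 - ENNReal.ofReal (Hfun r f (∑ i ∈ Finset.range n, E i ω)))
          ≤ 1 * (1 - ENNReal.ofReal (Hfun r f (∑ i ∈ Finset.range n, E i ω))) :=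
            mul_le_mul_left (hP1 n) _
        _ = _ := one_mul _
  have := hRtend.const_add (ENNReal.ofReal (Hfun r f 0))
  rw [add_zero] at this
  refine Tendsto.congr (fun n => ?_) this
  exact (hsplitn n).symm

end Prob2

end PGFLaux

open PGFLaux

/-- Probability generating functional of the 1-D Poisson point process (Eq. (27)):
`E[∏_{k≥1} f(T_k)] = exp(-r ∫_0^∞ (1 - f(x)) dx)`, both sides valued in `[0,1] ⊆ ℝ≥0∞`,
with `exp(-∞)` read as `0`. -/
theorem pgfl_poisson_point_process
    {Ω : Type*} [MeasureSpace Ω] [IsProbabilityMeasure (ℙ : Measure Ω)]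
    (r : ℝ) (hr : 0 < r)
    (E : ℕ → Ω → ℝ)
    (hindep : iIndepFun E ℙ)
    (hE : ∀ k, Measure.map (E k) ℙ = expMeasure r)
    (T : ℕ → Ω → ℝ) (hT : ∀ k ω, T k ω = ∑ i ∈ Finset.range k, E i ω)
    (f : ℝ → ℝ) (hf : Measurable f)
    (hf0 : ∀ x, 0 ≤ x → 0 ≤ f x) (hf1 : ∀ x, 0 ≤ x → f x ≤ 1) :
    ∫⁻ ω, ⨅ n : ℕ, ∏ k ∈ Finset.range n, ENNReal.ofReal (f (T (k + 1) ω)) ∂ℙ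
      = if (∫⁻ x in Ioi (0 : ℝ), ENNReal.ofReal (1 - f x)) = ⊤ then 0
        else ENNReal.ofReal
          (Real.exp (-(r * (∫⁻ x in Ioi (0 : ℝ), ENNReal.ofReal (1 - f x)).toReal))) := by
  classical
  -- measurable modifications
  have hEae : ∀ k, AEMeasurable (E k) ℙ := by
    intro k
    by_contra h
    have h0 := Measure.map_of_not_aemeasurable h
    rw [hE k] at h0
    have h1 : (expMeasure r) univ = 1 := (isProbabilityMeasure_expMeasure hr).measure_univ
    rw [h0] at h1
    simp at h1
  set E' : ℕ → Ω → ℝ := fun k => (hEae k).mk (E k) with hE'def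
  have hE'm : ∀ k, Measurable (E' k) := fun k => (hEae k).measurable_mk
  have hE'ae : ∀ k, E k =ᵐ[ℙ] E' k := fun k => (hEae k).ae_eq_mk
  have hindep' : iIndepFun E' ℙ := iIndepFun_congr_ae hindep hE'ae
  have hE' : ∀ k, Measure.map (E' k) ℙ = expMeasure r := fun k => by
    rw [← Measure.map_congr (hE'ae k), hE k]
  have hae := ae_nonneg_of_exp hE'm hE'
  -- clamped partial products
  set P : ℕ → Ω → ℝ≥0∞ := fun n ω => ∏ k ∈ Finset.range n,
    min (ENNReal.ofReal (f (∑ i ∈ Finset.range (k+1), E' i ω))) 1 with hPdef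
  have hPm : ∀ n, Measurable (P n) := fun n =>
    Finset.measurable_prod _ (fun k _ => (ENNReal.measurable_ofReal.comp
      (hf.comp (Finset.measurable_sum _ (fun i _ => hE'm i)))).min measurable_const)
  have hPanti : ∀ ω, Antitone (fun n => P n ω) := by
    intro ω
    refine antitone_nat_of_succ_le (fun n => ?_)
    rw [hPdef]
    dsimp only
    rw [Finset.prod_range_succ]
    exact mul_le_of_le_one_right' (min_le_right _ _)
  have hLHS1 : ∫⁻ ω, ⨅ n : ℕ, ∏ k ∈ Finset.range n,
        ENNReal.ofReal (f (T (k + 1) ω)) ∂ℙ = ∫⁻ ω, ⨅ n, P n ω ∂ℙ := by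
    refine lintegral_congr_ae ?_
    filter_upwards [hae, ae_all_iff.2 hE'ae] with ω h0 heq
    refine iInf_congr (fun n => Finset.prod_congr rfl (fun k _ => ?_))
    have hTT : T (k+1) ω = ∑ i ∈ Finset.range (k+1), E' i ω := by
      rw [hT (k+1) ω]
      exact Finset.sum_congr rfl (fun i _ => heq i)
    have hT0 : 0 ≤ ∑ i ∈ Finset.range (k+1), E' i ω :=
      Finset.sum_nonneg (fun i _ => h0 i)
    rw [hTT, min_eq_left (ENNReal.ofReal_le_one.2 (hf1 _ hT0))]
  have hLHS2 : ∫⁻ ω, ⨅ n, P n ω ∂ℙ = ⨅ n, ∫⁻ ω, P n ω ∂ℙ := by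
    refine lintegral_iInf hPm (fun m n hmn => fun ω => hPanti ω hmn) ?_
    have : ∫⁻ ω, P 0 ω ∂ℙ = 1 := by
      simp [hPdef]
    rw [this]
    exact ENNReal.one_ne_top
  have hPint : ∀ n, ∫⁻ ω, P n ω ∂ℙ = ∫⁻ ω, ∏ k ∈ Finset.range n,
      ENNReal.ofReal (f (∑ i ∈ Finset.range (k+1), E' i ω)) ∂ℙ := by
    intro n
    refine lintegral_congr_ae ?_
    filter_upwards [hae] with ω h0
    refine Finset.prod_congr rfl (fun k _ => ?_)
    exact min_eq_left (ENNReal.ofReal_le_one.2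
      (hf1 _ (Finset.sum_nonneg (fun i _ => h0 i))))
  rw [hLHS1, hLHS2]
  by_cases hfin : (∫⁻ x in Ioi (0 : ℝ), ENNReal.ofReal (1 - f x)) = ⊤
  · rw [if_pos hfin]
    -- truncations
    refine le_antisymm ?_ (zero_le)
    set ν : Measure ℝ := volume.withDensity (fun x => ENNReal.ofReal (1 - f x)) with hν
    have hνOK : ∀ s : Set ℝ, MeasurableSet s →
        ν s = ∫⁻ x in s, ENNReal.ofReal (1 - f x) := fun s hs =>
      withDensity_apply _ hs
    have hsup : (⨆ m : ℕ, ∫⁻ x in Ioc (0:ℝ) m, ENNReal.ofReal (1 - f x)) = ⊤ := by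
      have hmono : Monotone (fun m : ℕ => Ioc (0:ℝ) m) := fun a b hab =>
        Ioc_subset_Ioc le_rfl (by exact_mod_cast hab)
      have hunion : (⋃ m : ℕ, Ioc (0:ℝ) m) = Ioi 0 := by
        ext x
        simp only [mem_iUnion, mem_Ioc, mem_Ioi]
        constructor
        · rintro ⟨m, hm, _⟩; exact hm
        · intro hx
          obtain ⟨m, hm⟩ := exists_nat_ge x
          exact ⟨m, hx, hm⟩
      have := Directed.measure_iUnion (μ := ν) hmono.directed_le
      rw [hunion, hνOK _ measurableSet_Ioi, hfin] at this
      have h2 : (⨆ m : ℕ, ∫⁻ x in Ioc (0:ℝ) m, ENNReal.ofReal (1 - f x))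
          = ⨆ m : ℕ, ν (Ioc (0:ℝ) m) :=
        iSup_congr (fun m => (hνOK _ measurableSet_Ioc).symm)
      rw [h2, ← this]
    -- the bound for each K
    have hbound : ∀ K : ℕ, (⨅ n, ∫⁻ ω, P n ω ∂ℙ)
        ≤ ENNReal.ofReal (Real.exp (-r)) ^ K := by
      intro K
      obtain ⟨m, hm⟩ : ∃ m : ℕ, (K:ℝ≥0∞)
          < ∫⁻ x in Ioc (0:ℝ) m, ENNReal.ofReal (1 - f x) := by
        have : (K:ℝ≥0∞) < ⨆ m : ℕ, ∫⁻ x in Ioc (0:ℝ) m, ENNReal.ofReal (1 - f x) := by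
          rw [hsup]; exact lt_top_iff_ne_top.2 (by simp)
        exact lt_iSup_iff.1 this
      set fm : ℝ → ℝ := fun x => if x ≤ m then f x else 1 with hfm
      have hfm_meas : Measurable fm := Measurable.ite measurableSet_Iic hf measurable_const
      have hfm0 : ∀ x, 0 ≤ x → 0 ≤ fm x := by
        intro x hx; rw [hfm]; dsimp only; split_ifs
        · exact hf0 x hx
        · exact zero_le_one
      have hfm1 : ∀ x, 0 ≤ x → fm x ≤ 1 := by
        intro x hx; rw [hfm]; dsimp only; split_ifs
        · exact hf1 x hx
        · exact le_rfl
      have hIm : (∫⁻ x in Ioi (0:ℝ), ENNReal.ofReal (1 - fm x))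
          = ∫⁻ x in Ioc (0:ℝ) m, ENNReal.ofReal (1 - f x) := by
        have hsplit : Ioi (0:ℝ) = Ioc (0:ℝ) m ∪ Ioi (m:ℝ) :=
          (Ioc_union_Ioi_eq_Ioi (by positivity)).symm
        rw [hsplit, lintegral_union measurableSet_Ioi (Ioc_disjoint_Ioi le_rfl)]
        have hz : ∫⁻ x in Ioi (m:ℝ), ENNReal.ofReal (1 - fm x) = 0 := by
          have hz1 : ∀ x ∈ Ioi (m:ℝ), ENNReal.ofReal (1 - fm x) = 0 := by
            intro x hx
            rw [hfm]; dsimp only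
            rw [if_neg (not_le.2 hx)]
            simp
          rw [setLIntegral_congr_fun (g := fun _ => 0) measurableSet_Ioi
            hz1, lintegral_zero]
        rw [hz, add_zero]
        refine setLIntegral_congr_fun measurableSet_Ioc (fun x hx => ?_)
        rw [hfm]; dsimp only
        rw [if_pos hx.2]
      have hIm_ne : (∫⁻ x in Ioi (0:ℝ), ENNReal.ofReal (1 - fm x)) ≠ ⊤ := by
        rw [hIm]
        have hle : (∫⁻ x in Ioc (0:ℝ) m, ENNReal.ofReal (1 - f x))
            ≤ ∫⁻ _ in Ioc (0:ℝ) m, 1 := by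
          refine setLIntegral_mono' measurableSet_Ioc (fun x hx => ?_)
          exact ENNReal.ofReal_le_one.2 (by linarith [hf0 x hx.1.le])
        refine ne_top_of_le_ne_top ?_ hle
        rw [setLIntegral_one, Real.volume_Ioc]
        exact ENNReal.ofReal_ne_top
      have hmono_prod : ∀ n, ∫⁻ ω, P n ω ∂ℙ ≤ ∫⁻ ω, ∏ k ∈ Finset.range n,
          ENNReal.ofReal (fm (∑ i ∈ Finset.range (k+1), E' i ω)) ∂ℙ := by
        intro n
        rw [hPint n]
        refine lintegral_mono_ae ?_
        filter_upwards [hae] with ω h0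
        refine Finset.prod_le_prod' (fun k _ => ?_)
        refine ENNReal.ofReal_le_ofReal ?_
        have hx0 : 0 ≤ ∑ i ∈ Finset.range (k+1), E' i ω :=
          Finset.sum_nonneg fun i _ => h0 i
        rw [hfm]; dsimp only
        split_ifs with h
        · exact le_rfl
        · exact hf1 _ hx0
      have htd := finite_case hr hE'm hindep' hE' hfm_meas hfm0 hfm1 hIm_ne
      have hHval : ENNReal.ofReal (Hfun r fm 0)
          ≤ ENNReal.ofReal (Real.exp (-r)) ^ K := by
        rw [← ENNReal.ofReal_pow (Real.exp_pos _).le]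
        refine ENNReal.ofReal_le_ofReal ?_
        rw [← Real.exp_nat_mul, Hfun]
        refine Real.exp_le_exp.2 ?_
        have hA : Aint fm 0 = (∫⁻ x in Ioi (0:ℝ), ENNReal.ofReal (1 - fm x)).toReal :=
          Aint_eq_toReal hfm_meas hfm0 hfm1 le_rfl
        have hKA : (K:ℝ) ≤ Aint fm 0 := by
          rw [hA, hIm]
          have hne : (∫⁻ x in Ioc (0:ℝ) m, ENNReal.ofReal (1 - f x)) ≠ ⊤ := by
            rw [← hIm]; exact hIm_ne
          have h2 := (ENNReal.toReal_le_toReal (by simp) hne).2 hm.le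
          simpa using h2
        nlinarith [hr.le]
      calc (⨅ n, ∫⁻ ω, P n ω ∂ℙ) ≤ ENNReal.ofReal (Hfun r fm 0) := by
            refine ge_of_tendsto htd ?_
            refine Eventually.of_forall (fun n => ?_)
            exact le_trans (iInf_le _ n) (hmono_prod n)
        _ ≤ _ := hHval
    refine le_trans (le_iInf hbound) (le_of_eq (iInf_pow_eq_zero ?_))
    rw [← ENNReal.ofReal_one]
    exact (ENNReal.ofReal_lt_ofReal_iff zero_lt_one).2 (Real.exp_lt_one_iff.2 (by linarith))
  · rw [if_neg hfin]
    have htd := finite_case hr hE'm hindep' hE' hf hf0 hf1 hfin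
    have htd' : Tendsto (fun n => ∫⁻ ω, P n ω ∂ℙ) atTop
        (𝓝 (ENNReal.ofReal (Hfun r f 0))) :=
      Tendsto.congr (fun n => (hPint n).symm) htd
    have hanti2 : Antitone (fun n => ∫⁻ ω, P n ω ∂ℙ) := fun m n hmn =>
      lintegral_mono (fun ω => hPanti ω hmn)
    have heq := tendsto_nhds_unique (tendsto_atTop_iInf hanti2) htd'
    rw [heq]
    congr 1
    rw [Hfun, Aint_eq_toReal hf hf0 hf1 le_rfl]
end

section
/- (Campbell's formula.) Let r > 0, let (E_k)_{k≥1} be i.i.d. random variables with exponential distribution of rate r, and set T_k = E₁ + ⋯ + E_k. Then for every measurable function f : [0,∞) → [0,∞], E[ Σ_{k=1}^∞ f(T_k) ] = r · ∫_0^∞ f(x) dx, as an identity in [0,∞]. -/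
open MeasureTheory ProbabilityTheory Set Real
open scoped ENNReal

noncomputable def gpdf (r : ℝ) (k : ℕ) (x : ℝ) : ℝ≥0∞ :=
  ENNReal.ofReal (if 0 ≤ x then r ^ (k+1) * x ^ k / (k.factorial : ℝ) * Real.exp (-(r * x)) else 0)

lemma measurable_gpdf (r : ℝ) (k : ℕ) : Measurable (gpdf r k) := by
  apply Measurable.ennreal_ofReal
  apply Measurable.ite measurableSet_Ici _ measurable_const
  fun_prop

lemma gpdf_zero (r : ℝ) : gpdf r 0 = exponentialPDF r := by
  funext x
  simp [gpdf, exponentialPDF_eq]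

lemma gpdf_conv {r : ℝ} (hr : 0 < r) (k : ℕ) (z : ℝ) :
    ∫⁻ x, gpdf r k x * exponentialPDF r (z - x) = gpdf r (k + 1) z := by
  have hptw : (fun x => gpdf r k x * exponentialPDF r (z - x)) =
      fun x => ENNReal.ofReal ((Icc (0:ℝ) z).indicator
        (fun x => r ^ (k+2) / (k.factorial : ℝ) * Real.exp (-(r * z)) * x ^ k) x) := by
    funext x
    by_cases hx : 0 ≤ x
    · by_cases hxz : x ≤ z
      · rw [indicator_of_mem (mem_Icc.2 ⟨hx, hxz⟩), gpdf, if_pos hx,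
          exponentialPDF_of_nonneg (by linarith), ← ENNReal.ofReal_mul]
        · congr 1
          have hexp : rexp (-(r * x)) * rexp (-(r * (z - x))) = rexp (-(r * z)) := by
            rw [← Real.exp_add]; ring_nf
          calc r ^ (k + 1) * x ^ k / (k.factorial : ℝ) * rexp (-(r * x)) *
                (r * rexp (-(r * (z - x))))
              = r ^ (k + 2) / (k.factorial : ℝ) * (rexp (-(r * x)) * rexp (-(r * (z - x))))
                * x ^ k := by ring
            _ = _ := by rw [hexp]
        · positivity
      · rw [indicator_of_notMem (by simp [hxz]), exponentialPDF_of_neg (by linarith)]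
        simp
    · rw [indicator_of_notMem (by simp [hx]), gpdf, if_neg hx]
      simp
  rw [hptw]
  rcases le_or_gt 0 z with hz | hz
  · rw [← ofReal_integral_eq_lintegral_ofReal]
    · rw [integral_indicator measurableSet_Icc]
      rw [MeasureTheory.integral_Icc_eq_integral_Ioc, ← intervalIntegral.integral_of_le hz,
        intervalIntegral.integral_const_mul, integral_pow]
      rw [gpdf, if_pos hz]
      congr 1
      simp only [zero_pow (Nat.succ_ne_zero k), sub_zero, Nat.factorial_succ, Nat.cast_mul]
      push_cast
      field_simp
    · apply (integrable_indicator_iff measurableSet_Icc).2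
      apply (ContinuousOn.integrableOn_compact isCompact_Icc)
      fun_prop
    · filter_upwards with x
      apply indicator_nonneg
      intro y hy
      have : (0:ℝ) ≤ y ^ k := pow_nonneg hy.1 k
      positivity
  · have : Icc (0:ℝ) z = ∅ := Icc_eq_empty (by linarith)
    simp [this, gpdf, not_le.2 hz]

lemma measurable_ePDF (r : ℝ) : Measurable (exponentialPDF r) :=
  (measurable_exponentialPDFReal r).ennreal_ofReal

lemma Measure.ext_lintegral {α : Type*} [MeasurableSpace α] (μ ν : Measure α)
    (h : ∀ φ : α → ℝ≥0∞, Measurable φ → ∫⁻ x, φ x ∂μ = ∫⁻ x, φ x ∂ν) : μ = ν :=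
  Measure.ext fun s hs => by
    rw [← lintegral_indicator_one hs, ← lintegral_indicator_one hs,
      h _ (measurable_one.indicator hs)]

lemma map_add_conv {r : ℝ} (hr : 0 < r) (k : ℕ) :
    Measure.map (fun p : ℝ × ℝ => p.1 + p.2)
      ((volume.withDensity (gpdf r k)).prod (volume.withDensity (exponentialPDF r)))
    = volume.withDensity (gpdf r (k + 1)) := by
  apply Measure.ext_lintegral
  intro φ hφ
  rw [lintegral_map hφ measurable_add,
    lintegral_withDensity_eq_lintegral_mul _ (measurable_gpdf r (k+1)) hφ]
  rw [lintegral_prod (fun p => φ (p.1 + p.2)) ((hφ.comp measurable_add).aemeasurable)]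
  have step1 : ∀ x : ℝ, ∫⁻ y, φ (x + y) ∂(volume.withDensity (exponentialPDF r))
      = ∫⁻ z, exponentialPDF r (z - x) * φ z := by
    intro x
    rw [lintegral_withDensity_eq_lintegral_mul _ (measurable_ePDF r)
      (show Measurable fun y => φ (x + y) from hφ.comp (measurable_const_add x))]
    rw [← lintegral_add_right_eq_self (fun z => exponentialPDF r (z - x) * φ z) x]
    congr 1
    funext y
    simp [add_sub_cancel_right, add_comm]
  simp_rw [step1]
  have hinner : Measurable (Function.uncurry fun x z => exponentialPDF r (z - x) * φ z) :=
    ((measurable_ePDF r).comp (measurable_snd.sub measurable_fst)).mul (hφ.comp measurable_snd)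
  rw [lintegral_withDensity_eq_lintegral_mul _ (measurable_gpdf r k)
    hinner.lintegral_prod_right]
  simp only [Pi.mul_apply]
  have hmul : ∀ x : ℝ, gpdf r k x * ∫⁻ z, exponentialPDF r (z - x) * φ z
      = ∫⁻ z, gpdf r k x * (exponentialPDF r (z - x) * φ z) := fun x =>
    (lintegral_const_mul _ (((measurable_ePDF r).comp (measurable_id.sub measurable_const)).mul hφ)).symm
  simp_rw [hmul]
  rw [lintegral_lintegral_swap]
  · congr 1
    funext z
    rw [show (fun x => gpdf r k x * (exponentialPDF r (z - x) * φ z))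
        = fun x => (gpdf r k x * exponentialPDF r (z - x)) * φ z by funext x; ring]
    rw [lintegral_mul_const _ (show Measurable fun x => gpdf r k x * exponentialPDF r (z - x) from
      (measurable_gpdf r k).mul ((measurable_ePDF r).comp (measurable_const.sub measurable_id)))]
    rw [gpdf_conv hr]
  · apply Measurable.aemeasurable
    exact ((measurable_gpdf r k).comp measurable_fst).mul
      (((measurable_ePDF r).comp (measurable_snd.sub measurable_fst)).mul (hφ.comp measurable_snd))

lemma expMeasure_eq (r : ℝ) : expMeasure r = volume.withDensity (exponentialPDF r) := rfl

lemma iIndepFun_congr {Ω : Type*} [MeasurableSpace Ω] {μ : Measure Ω} {E E' : ℕ → Ω → ℝ}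
    (h : iIndepFun E μ) (heq : ∀ i, E i =ᵐ[μ] E' i) :
    iIndepFun E' μ := by
  rw [iIndepFun_iff_measure_inter_preimage_eq_mul] at h ⊢
  intro S sets hsets
  have hae : ∀ᵐ ω ∂μ, ∀ i ∈ S, E i ω = E' i ω :=
    (ae_ball_iff S.countable_toSet).2 fun i _ => heq i
  have h1 : (⋂ i ∈ S, E' i ⁻¹' sets i) =ᵐ[μ] (⋂ i ∈ S, E i ⁻¹' sets i) :=
    Filter.eventuallyEq_set.2 <| hae.mono fun ω hω => by
      simp only [mem_iInter, mem_preimage]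
      exact ⟨fun H i hi => by rw [hω i hi]; exact H i hi,
        fun H i hi => by rw [← hω i hi]; exact H i hi⟩
  rw [measure_congr h1, h S hsets]
  exact Finset.prod_congr rfl fun i _ =>
    measure_congr (Filter.eventuallyEq_set.2 ((heq i).mono fun ω hω => by
      simp only [mem_preimage, hω]))

lemma law_T {Ω : Type*} [MeasureSpace Ω] [IsProbabilityMeasure (ℙ : Measure Ω)]
    {r : ℝ} (hr : 0 < r) {E : ℕ → Ω → ℝ} (hmeas : ∀ i, Measurable (E i))
    (hindep : iIndepFun E ℙ)
    (hE : ∀ k, Measure.map (E k) ℙ = expMeasure r) (k : ℕ) :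
    Measure.map (fun ω => ∑ i ∈ Finset.range (k+1), E i ω) ℙ
      = volume.withDensity (gpdf r k) := by
  induction k with
  | zero =>
    simp only [zero_add, Finset.sum_range_one]
    rw [show (fun ω => E 0 ω) = E 0 from rfl, hE 0, gpdf_zero, expMeasure_eq]
  | succ k ih =>
    have hS : Measurable fun ω => ∑ i ∈ Finset.range (k+1), E i ω :=
      Finset.measurable_sum _ fun i _ => hmeas i
    have hind : IndepFun (fun ω => ∑ i ∈ Finset.range (k+1), E i ω) (E (k+1)) ℙ := by
      have h := hindep.indepFun_finsetSum_of_notMem hmeas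
        (s := Finset.range (k+1)) (i := k+1) (by simp)
      convert h using 1
      funext ω
      simp [Finset.sum_apply]
    have hmap : Measure.map (fun ω => (∑ i ∈ Finset.range (k+1), E i ω, E (k+1) ω)) ℙ
        = (Measure.map (fun ω => ∑ i ∈ Finset.range (k+1), E i ω) ℙ).prod
          (Measure.map (E (k+1)) ℙ) :=
      (indepFun_iff_map_prod_eq_prod_map_map hS.aemeasurable (hmeas _).aemeasurable).1 hind
    have hcomp : (fun ω => ∑ i ∈ Finset.range (k+2), E i ω)
        = (fun p : ℝ × ℝ => p.1 + p.2) ∘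
          (fun ω => (∑ i ∈ Finset.range (k+1), E i ω, E (k+1) ω)) := by
      funext ω
      simp [Finset.sum_range_succ, Function.comp]
    rw [hcomp, ← Measure.map_map measurable_add (hS.prodMk (hmeas _)), hmap, ih,
      hE (k+1), expMeasure_eq, map_add_conv hr k]

lemma tsum_gpdf {r : ℝ} (hr : 0 < r) {z : ℝ} (hz : 0 ≤ z) :
    ∑' k : ℕ, gpdf r k z = ENNReal.ofReal r := by
  have key : ∀ k : ℕ, (if 0 ≤ z then r ^ (k+1) * z ^ k / (k.factorial : ℝ)
        * Real.exp (-(r * z)) else 0)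
      = (r * Real.exp (-(r * z))) * ((r * z) ^ k / (k.factorial : ℝ)) := by
    intro k
    rw [if_pos hz, mul_pow, pow_succ]
    ring
  simp only [gpdf, key]
  rw [← ENNReal.ofReal_tsum_of_nonneg (fun n => mul_nonneg
      (mul_nonneg hr.le (Real.exp_nonneg _))
      (div_nonneg (pow_nonneg (mul_nonneg hr.le hz) n) (Nat.cast_nonneg _)))
    ((Real.summable_pow_div_factorial (r*z)).mul_left _)]
  congr 1
  rw [tsum_mul_left]
  have hexp : ∑' k : ℕ, (r*z)^k / (k.factorial:ℝ) = Real.exp (r*z) := by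
    rw [Real.exp_eq_exp_ℝ, NormedSpace.exp_eq_tsum_div]
  rw [hexp, mul_assoc, ← Real.exp_add]
  simp

/-- Campbell's formula for the 1-D Poisson point process:
`E[∑_{k≥1} f(T_k)] = r ∫_0^∞ f(x) dx`, as an identity in `[0,∞]`. -/
theorem campbell_formula
    {Ω : Type*} [MeasureSpace Ω] [IsProbabilityMeasure (ℙ : Measure Ω)]
    (r : ℝ) (hr : 0 < r)
    (E : ℕ → Ω → ℝ)
    (hindep : iIndepFun E ℙ)
    (hE : ∀ k, Measure.map (E k) ℙ = expMeasure r)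
    (T : ℕ → Ω → ℝ) (hT : ∀ k ω, T k ω = ∑ i ∈ Finset.range k, E i ω)
    (f : ℝ → ℝ≥0∞) (hf : Measurable f) :
    ∫⁻ ω, ∑' k : ℕ, f (T (k + 1) ω) ∂ℙ
      = ENNReal.ofReal r * ∫⁻ x in Ioi (0 : ℝ), f x := by
  -- measurable modifications of E
  have hEae : ∀ i, AEMeasurable (E i) ℙ := by
    intro i
    by_contra h
    have h0 := hE i
    rw [Measure.map_of_not_aemeasurable h] at h0
    have : IsProbabilityMeasure (expMeasure r) := isProbabilityMeasure_expMeasure hr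
    exact this.ne_zero _ h0.symm
  set E' : ℕ → Ω → ℝ := fun i => (hEae i).mk (E i) with hE'def
  have heq : ∀ i, E i =ᵐ[ℙ] E' i := fun i => (hEae i).ae_eq_mk
  have hE'meas : ∀ i, Measurable (E' i) := fun i => (hEae i).measurable_mk
  have hmapE' : ∀ i, Measure.map (E' i) ℙ = expMeasure r := fun i => by
    rw [← Measure.map_congr (heq i), hE i]
  have hindep' : iIndepFun E' ℙ := iIndepFun_congr hindep heq
  have hSmeas : ∀ k : ℕ, Measurable fun ω => ∑ i ∈ Finset.range (k+1), E' i ω :=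
    fun k => Finset.measurable_sum _ fun i _ => hE'meas i
  have hall : ∀ᵐ ω ∂ℙ, ∀ i, E i ω = E' i ω := ae_all_iff.2 fun i => heq i
  have hstep1 : ∫⁻ ω, ∑' k : ℕ, f (T (k + 1) ω) ∂ℙ
      = ∫⁻ ω, ∑' k : ℕ, f (∑ i ∈ Finset.range (k+1), E' i ω) ∂ℙ := by
    apply lintegral_congr_ae
    filter_upwards [hall] with ω hω
    exact tsum_congr fun k => by
      rw [hT, Finset.sum_congr rfl fun i _ => hω i]
  rw [hstep1, lintegral_tsum fun k =>
    (show AEMeasurable (fun ω => f (∑ i ∈ Finset.range (k+1), E' i ω)) ℙ from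
      (hf.comp (hSmeas k)).aemeasurable)]
  have hstep2 : ∀ k : ℕ, ∫⁻ ω, f (∑ i ∈ Finset.range (k+1), E' i ω) ∂ℙ
      = ∫⁻ z, gpdf r k z * f z := by
    intro k
    rw [← lintegral_map hf (hSmeas k), law_T hr hE'meas hindep' hmapE' k,
      lintegral_withDensity_eq_lintegral_mul _ (measurable_gpdf r k) hf]
    rfl
  simp_rw [hstep2]
  rw [← lintegral_tsum fun k => (((measurable_gpdf r k).mul hf).aemeasurable :
    AEMeasurable (fun z => gpdf r k z * f z))]
  have hstep3 : (fun z => ∑' k : ℕ, gpdf r k z * f z)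
      = (Ici (0:ℝ)).indicator (fun z => ENNReal.ofReal r * f z) := by
    funext z
    rcases le_or_gt 0 z with hz | hz
    · rw [indicator_of_mem (mem_Ici.2 hz), ENNReal.tsum_mul_right, tsum_gpdf hr hz]
    · rw [indicator_of_notMem (by simpa using hz), ENNReal.tsum_mul_right]
      have : ∑' k : ℕ, gpdf r k z = 0 := by
        simp [gpdf, not_le.2 hz]
      rw [this, zero_mul]
  rw [hstep3]
  rw [show lintegral (volume : Measure ℝ) ((Ici (0:ℝ)).indicator fun z => ENNReal.ofReal r * f z)
      = ∫⁻ z, (Ici (0:ℝ)).indicator (fun z => ENNReal.ofReal r * f z) z from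
    lintegral_congr fun z => rfl]
  rw [lintegral_indicator measurableSet_Ici _]
  rw [lintegral_const_mul _ hf]
  congr 1
  rw [← MeasureTheory.restrict_Ioi_eq_restrict_Ici]
end

section
/- (Almost sure finiteness of the interference.) For every α_d > 1 and every y ≥ 0, the random series Σ_{k=1}^∞ g_k (y + T_k)^{−α_d} converges almost surely to a finite value. -/
open MeasureTheory ProbabilityTheory Set

section Aux

variable {Ω : Type*} [MeasureSpace Ω] [IsProbabilityMeasure (ℙ : Measure Ω)]

lemma aux_aemeasurable {f : Ω → ℝ} {r : ℝ} (hr : 0 < r)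
    (h : Measure.map f ℙ = expMeasure r) : AEMeasurable f ℙ := by
  by_contra hc
  rw [Measure.map_of_not_aemeasurable hc] at h
  haveI := isProbabilityMeasure_expMeasure hr
  have := measure_univ (μ := expMeasure r)
  rw [← h] at this
  simp at this

lemma aux_Iic_zero {r : ℝ} (hr : 0 < r) : expMeasure r (Iic (0 : ℝ)) = 0 := by
  haveI := isProbabilityMeasure_expMeasure hr
  rw [← ofReal_cdf (expMeasure r) 0]
  have : cdf (expMeasure r) 0 = if 0 ≤ (0:ℝ) then 1 - Real.exp (-(r * 0)) else 0 := cdf_expMeasure_eq hr 0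
  rw [this]
  norm_num

lemma aux_tail {r t : ℝ} (hr : 0 < r) (ht : 0 ≤ t) :
    expMeasure r (Ioi t) ≤ ENNReal.ofReal (Real.exp (-(r * t))) := by
  haveI := isProbabilityMeasure_expMeasure hr
  have hIic : expMeasure r (Iic t) = ENNReal.ofReal (1 - Real.exp (-(r * t))) := by
    rw [← ofReal_cdf (expMeasure r) t]
    have : cdf (expMeasure r) t = if 0 ≤ t then 1 - Real.exp (-(r * t)) else 0 := cdf_expMeasure_eq hr t
    rw [this, if_pos ht]
  have hexp_le_one : Real.exp (-(r * t)) ≤ 1 := by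
    rw [Real.exp_le_one_iff]
    nlinarith
  have : Ioi t = (Iic t)ᶜ := by rw [compl_Iic]
  rw [this, measure_compl measurableSet_Iic (measure_ne_top _ _), measure_univ, hIic]
  rw [tsub_le_iff_right, ← ENNReal.ofReal_add (Real.exp_pos _).le (by linarith)]
  rw [show Real.exp (-(r * t)) + (1 - Real.exp (-(r * t))) = 1 by ring, ENNReal.ofReal_one]

lemma aux_ae_nonneg {f : Ω → ℝ} {r : ℝ} (hr : 0 < r)
    (h : Measure.map f ℙ = expMeasure r) : ∀ᵐ ω ∂ℙ, 0 ≤ f ω := by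
  have hm := aux_aemeasurable hr h
  have hz : (ℙ : Measure Ω) (f ⁻¹' Iic 0) = 0 := by
    rw [← Measure.map_apply₀ hm measurableSet_Iic.nullMeasurableSet, h, aux_Iic_zero hr]
  rw [ae_iff]
  refine measure_mono_null ?_ hz
  intro ω hω
  exact (not_le.mp hω).le

end Aux

set_option maxHeartbeats 1000000 in
/-- Almost sure finiteness of the aggregate interference series. -/
theorem interference_summable_ae
    {Ω : Type*} [MeasureSpace Ω] [IsProbabilityMeasure (ℙ : Measure Ω)]
    (lamD mu : ℝ) (hlam : 0 < lamD) (hmu : 0 < mu)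
    (E g : ℕ → Ω → ℝ)
    (hindep : iIndepFun (Sum.elim E g) ℙ)
    (hE : ∀ k, Measure.map (E k) ℙ = expMeasure (2 * lamD))
    (hg : ∀ k, Measure.map (g k) ℙ = expMeasure mu)
    (T : ℕ → Ω → ℝ) (hT : ∀ k ω, T k ω = ∑ i ∈ Finset.range k, E i ω)
    (alpha : ℝ) (ha : 1 < alpha) (y : ℝ) (hy : 0 ≤ y) :
    ∀ᵐ ω ∂ℙ, Summable (fun k : ℕ => g (k + 1) ω * (y + T (k + 1) ω) ^ (-alpha)) := by
  have hr : (0 : ℝ) < 2 * lamD := by linarith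
  -- truncation function
  set φ : ℝ → ℝ := fun x => min (max x 0) 1 with hφdef
  have hφm : Measurable φ := (measurable_id.max measurable_const).min measurable_const
  have hφ0 : ∀ x, 0 ≤ φ x := fun x => le_min (le_max_right x 0) zero_le_one
  have hφ1 : ∀ x, φ x ≤ 1 := fun x => min_le_right _ _
  set X : ℕ → Ω → ℝ := fun i ω => φ (E i ω) with hXdef
  have haeE : ∀ i, AEMeasurable (E i) ℙ := fun i => aux_aemeasurable hr (hE i)
  have haeg : ∀ i, AEMeasurable (g i) ℙ := fun i => aux_aemeasurable hmu (hg i)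
  have hXmeas : ∀ i, AEStronglyMeasurable (X i) ℙ :=
    fun i => (hφm.comp_aemeasurable (haeE i)).aestronglyMeasurable
  have hXbd : ∀ i, ∀ ω, ‖X i ω‖ ≤ 1 := by
    intro i ω
    rw [Real.norm_eq_abs, abs_of_nonneg (hφ0 _)]
    exact hφ1 _
  have hXint : Integrable (X 0) ℙ :=
    Integrable.mono' (integrable_const 1) (hXmeas 0) (Filter.Eventually.of_forall (hXbd 0))
  have hXindep : Pairwise (Function.onFun (IndepFun · · ℙ) X) := by
    intro i j hij
    have h1 : IndepFun (E i) (E j) ℙ :=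
      hindep.indepFun (show (Sum.inl i : ℕ ⊕ ℕ) ≠ Sum.inl j from
        fun h => hij (Sum.inl.inj h))
    exact h1.comp hφm hφm
  have hXident : ∀ i, IdentDistrib (X i) (X 0) ℙ ℙ := by
    intro i
    have hEid : IdentDistrib (E i) (E 0) ℙ ℙ :=
      ⟨haeE i, haeE 0, by rw [hE i, hE 0]⟩
    exact hEid.comp hφm
  -- the mean of the truncated variable is positive
  haveI : IsProbabilityMeasure (expMeasure (2 * lamD)) := isProbabilityMeasure_expMeasure hr
  have hφint : Integrable φ (expMeasure (2 * lamD)) :=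
    Integrable.mono' (integrable_const 1) hφm.aestronglyMeasurable
      (Filter.Eventually.of_forall fun x => by
        rw [Real.norm_eq_abs, abs_of_nonneg (hφ0 _)]; exact hφ1 _)
  have hmean_eq : (ℙ : Measure Ω)[X 0] = ∫ x, φ x ∂(expMeasure (2 * lamD)) := by
    rw [← hE 0, integral_map (haeE 0) (by rw [hE 0]; exact hφm.aestronglyMeasurable)]
  have hc : 0 < (ℙ : Measure Ω)[X 0] := by
    rw [hmean_eq, integral_pos_iff_support_of_nonneg_ae
      (Filter.Eventually.of_forall hφ0) hφint]
    have hIoi : expMeasure (2 * lamD) (Ioi (0 : ℝ)) = 1 := by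
      rw [show Ioi (0:ℝ) = (Iic 0)ᶜ by rw [compl_Iic],
        measure_compl measurableSet_Iic (measure_ne_top _ _), measure_univ, aux_Iic_zero hr]
      simp
    have hsub : Ioi (0 : ℝ) ⊆ Function.support φ := by
      intro x hx
      have : 0 < φ x := lt_min (lt_of_lt_of_le hx (le_max_left x 0) : (0:ℝ) < max x 0) one_pos
      exact ne_of_gt this
    calc (0 : ENNReal) < 1 := by norm_num
      _ = expMeasure (2 * lamD) (Ioi 0) := hIoi.symm
      _ ≤ expMeasure (2 * lamD) (Function.support φ) := measure_mono hsub
  set c : ℝ := (ℙ : Measure Ω)[X 0] with hcdef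
  -- strong law of large numbers
  have hSLLN := strong_law_ae_real X hXint hXindep hXident
  -- Borel–Cantelli for the g's
  set s : ℕ → Set Ω := fun k => {ω | (2 / mu) * Real.log k < g k ω} with hsdef
  have hsbound : ∀ k, (ℙ : Measure Ω) (s k) ≤ ENNReal.ofReal (Real.exp (-(2 * Real.log k))) := by
    intro k
    have hlog : 0 ≤ Real.log k := by
      rcases Nat.eq_zero_or_pos k with hk | hk
      · simp [hk]
      · exact Real.log_nonneg (by exact_mod_cast hk)
    have ht : 0 ≤ (2 / mu) * Real.log k := by positivity
    have hset : s k = g k ⁻¹' Ioi ((2 / mu) * Real.log k) := rfl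
    rw [hset, ← Measure.map_apply₀ (haeg k) measurableSet_Ioi.nullMeasurableSet, hg k]
    have := aux_tail hmu ht
    have harg : mu * ((2 / mu) * Real.log k) = 2 * Real.log k := by
      field_simp
    rwa [harg] at this
  have hsummexp : Summable (fun k : ℕ => Real.exp (-(2 * Real.log k))) := by
    have h1 : Summable (fun n : ℕ => ((n : ℝ)) ^ (-2 : ℝ)) :=
      Real.summable_nat_rpow.mpr (by norm_num)
    have h2 : Summable (fun n : ℕ => (((n + 1 : ℕ) : ℝ)) ^ (-2 : ℝ)) :=
      (summable_nat_add_iff (f := fun n : ℕ => ((n : ℝ)) ^ (-2 : ℝ)) 1).mpr h1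
    refine (summable_nat_add_iff (f := fun k : ℕ => Real.exp (-(2 * Real.log k))) 1).mp
      (h2.congr ?_)
    intro n
    rw [Real.rpow_def_of_pos (by positivity : (0:ℝ) < ((n + 1 : ℕ) : ℝ))]
    ring_nf
  have htsum : (∑' k, (ℙ : Measure Ω) (s k)) ≠ ⊤ := by
    refine ne_top_of_le_ne_top ?_ (ENNReal.tsum_le_tsum hsbound)
    rw [← ENNReal.ofReal_tsum_of_nonneg (fun k => (Real.exp_pos _).le) hsummexp]
    exact ENNReal.ofReal_ne_top
  have hBC := ae_eventually_notMem htsum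
  -- a.e. nonnegativity
  have hEnn : ∀ᵐ ω ∂ℙ, ∀ i, 0 ≤ E i ω :=
    ae_all_iff.mpr fun i => aux_ae_nonneg hr (hE i)
  have hgnn : ∀ᵐ ω ∂ℙ, ∀ i, 0 ≤ g i ω :=
    ae_all_iff.mpr fun i => aux_ae_nonneg hmu (hg i)
  -- exponent β
  set β : ℝ := (1 + alpha) / 2 with hβdef
  have hβ1 : 1 < β := by rw [hβdef]; linarith
  have hβα : β < alpha := by rw [hβdef]; linarith
  have hαβ : 0 < alpha - β := by linarith
  have hsumβ : Summable (fun k : ℕ => ((k : ℝ) + 1) ^ (-β)) := by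
    have h1 : Summable (fun n : ℕ => ((n : ℝ)) ^ (-β)) :=
      Real.summable_nat_rpow.mpr (by linarith)
    have h2 : Summable (fun n : ℕ => (((n + 1 : ℕ) : ℝ)) ^ (-β)) :=
      (summable_nat_add_iff (f := fun n : ℕ => ((n : ℝ)) ^ (-β)) 1).mpr h1
    refine h2.congr fun n => ?_
    push_cast
    ring_nf
  -- combine everything
  filter_upwards [hSLLN, hEnn, hgnn, hBC] with ω hω hEω hgω hBCω
  -- linear lower bound on partial sums of X
  have hc2 : 0 < c / 2 := by positivity
  have hSlow : ∀ᶠ n : ℕ in Filter.atTop, c / 2 * (n : ℝ) ≤ ∑ i ∈ Finset.range n, X i ω := by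
    have hev : ∀ᶠ n : ℕ in Filter.atTop,
        c / 2 ≤ (∑ i ∈ Finset.range n, X i ω) / (n : ℝ) :=
      hω.eventually (eventually_ge_nhds (by linarith : c / 2 < c))
    filter_upwards [hev, Filter.eventually_ge_atTop 1] with n hn hn1
    have hnpos : (0 : ℝ) < (n : ℝ) := by exact_mod_cast hn1
    calc c / 2 * (n : ℝ) ≤ ((∑ i ∈ Finset.range n, X i ω) / (n : ℝ)) * (n : ℝ) :=
          mul_le_mul_of_nonneg_right hn hnpos.le
      _ = ∑ i ∈ Finset.range n, X i ω := by field_simp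
  have hXleE : ∀ n, ∑ i ∈ Finset.range n, X i ω ≤ T n ω := by
    intro n
    rw [hT]
    refine Finset.sum_le_sum fun i _ => ?_
    calc X i ω = min (max (E i ω) 0) 1 := rfl
      _ ≤ max (E i ω) 0 := min_le_left _ _
      _ = E i ω := max_eq_left (hEω i)
  have hTlow : ∀ᶠ k : ℕ in Filter.atTop, c / 2 * ((k : ℝ) + 1) ≤ T (k + 1) ω := by
    obtain ⟨N, hN⟩ := Filter.eventually_atTop.mp hSlow
    refine Filter.eventually_atTop.mpr ⟨N, fun k hk => ?_⟩
    have h1 := hN (k + 1) (by omega)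
    have h2 := hXleE (k + 1)
    have : ((k + 1 : ℕ) : ℝ) = (k : ℝ) + 1 := by push_cast; ring
    rw [this] at h1
    linarith
  -- logarithmic upper bound on g
  have hglog : ∀ᶠ k : ℕ in Filter.atTop, g (k + 1) ω ≤ (2 / mu) * Real.log ((k : ℝ) + 1) := by
    obtain ⟨M, hM⟩ := Filter.eventually_atTop.mp hBCω
    refine Filter.eventually_atTop.mpr ⟨M, fun k hk => ?_⟩
    have := hM (k + 1) (by omega)
    simp only [hsdef, mem_setOf_eq, not_lt] at this
    have hcast : ((k + 1 : ℕ) : ℝ) = (k : ℝ) + 1 := by push_cast; ring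
    rwa [hcast] at this
  -- log is eventually dominated
  set K : ℝ := (2 / mu) * (c / 2) ^ (-alpha) with hKdef
  have hKpos : 0 < K := by
    have := Real.rpow_pos_of_pos hc2 (-alpha)
    positivity
  have hloglittle : ∀ᶠ x : ℝ in Filter.atTop, K * Real.log x ≤ x ^ (alpha - β) := by
    have hb := (isLittleO_log_rpow_atTop hαβ).bound (by positivity : (0:ℝ) < K⁻¹)
    filter_upwards [hb, Filter.eventually_ge_atTop (1 : ℝ)] with x hx hx1
    rw [Real.norm_eq_abs, Real.norm_eq_abs, abs_of_nonneg (Real.log_nonneg hx1),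
      abs_of_nonneg (Real.rpow_nonneg (by linarith) _)] at hx
    calc K * Real.log x ≤ K * (K⁻¹ * x ^ (alpha - β)) :=
          mul_le_mul_of_nonneg_left hx hKpos.le
      _ = x ^ (alpha - β) := by field_simp
  have hcomp : Filter.Tendsto (fun k : ℕ => ((k : ℝ) + 1)) Filter.atTop Filter.atTop :=
    Filter.tendsto_atTop_add_const_right _ 1 tendsto_natCast_atTop_atTop
  have hloglittleK : ∀ᶠ k : ℕ in Filter.atTop,
      K * Real.log ((k : ℝ) + 1) ≤ ((k : ℝ) + 1) ^ (alpha - β) :=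
    hcomp.eventually hloglittle
  -- final bound
  have hbound : ∀ᶠ k : ℕ in Filter.atTop,
      ‖g (k + 1) ω * (y + T (k + 1) ω) ^ (-alpha)‖ ≤ 1 * ‖((k : ℝ) + 1) ^ (-β)‖ := by
    filter_upwards [hTlow, hglog, hloglittleK] with k hk1 hk2 hk3
    have hkcast : (0 : ℝ) < (k : ℝ) + 1 := by positivity
    have hA : c / 2 * ((k : ℝ) + 1) ≤ y + T (k + 1) ω := by linarith
    have hApos : 0 < y + T (k + 1) ω := lt_of_lt_of_le (by positivity) hA
    have hterm_nonneg : 0 ≤ g (k + 1) ω * (y + T (k + 1) ω) ^ (-alpha) :=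
      mul_nonneg (hgω _) (Real.rpow_pos_of_pos hApos _).le
    rw [Real.norm_eq_abs, abs_of_nonneg hterm_nonneg, Real.norm_eq_abs,
      abs_of_nonneg (Real.rpow_nonneg hkcast.le _), one_mul]
    have hlognn : 0 ≤ Real.log ((k : ℝ) + 1) := Real.log_nonneg (by linarith)
    have step1 : g (k + 1) ω * (y + T (k + 1) ω) ^ (-alpha) ≤
        ((2 / mu) * Real.log ((k : ℝ) + 1)) * (c / 2 * ((k : ℝ) + 1)) ^ (-alpha) := by
      refine mul_le_mul hk2 ?_ (Real.rpow_pos_of_pos hApos _).le (by positivity)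
      exact Real.rpow_le_rpow_of_nonpos (by positivity) hA (by linarith)
    have step2 : ((2 / mu) * Real.log ((k : ℝ) + 1)) * (c / 2 * ((k : ℝ) + 1)) ^ (-alpha)
        = (K * Real.log ((k : ℝ) + 1)) * ((k : ℝ) + 1) ^ (-alpha) := by
      rw [Real.mul_rpow hc2.le hkcast.le, hKdef]
      ring
    have step3 : (K * Real.log ((k : ℝ) + 1)) * ((k : ℝ) + 1) ^ (-alpha) ≤
        ((k : ℝ) + 1) ^ (alpha - β) * ((k : ℝ) + 1) ^ (-alpha) :=
      mul_le_mul_of_nonneg_right hk3 (Real.rpow_nonneg hkcast.le _)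
    have step4 : ((k : ℝ) + 1) ^ (alpha - β) * ((k : ℝ) + 1) ^ (-alpha)
        = ((k : ℝ) + 1) ^ (-β) := by
      rw [← Real.rpow_add hkcast]
      ring_nf
    calc g (k + 1) ω * (y + T (k + 1) ω) ^ (-alpha)
        ≤ ((2 / mu) * Real.log ((k : ℝ) + 1)) * (c / 2 * ((k : ℝ) + 1)) ^ (-alpha) := step1
      _ = (K * Real.log ((k : ℝ) + 1)) * ((k : ℝ) + 1) ^ (-alpha) := step2
      _ ≤ ((k : ℝ) + 1) ^ (alpha - β) * ((k : ℝ) + 1) ^ (-alpha) := step3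
      _ = ((k : ℝ) + 1) ^ (-β) := step4
  exact summable_of_isBigO_nat (g := fun k : ℕ => ((k : ℝ) + 1) ^ (-β)) hsumβ (Asymptotics.isBigO_iff.mpr ⟨1, hbound⟩)
end
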